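/- arXiv:2311.18432 — 7 statements merged into one kernel-verified Lean document; each statement's English description precedes it below -/
import Mathlib

section
/- Let p be an odd prime, s a positive integer and s1 a positive divisor of s. Then the number of pairs (x,y) in F_{p^s} × F_{p^s} with Tr_{F_{p^s}/F_{p^{s1}}}(x^2 + y^2) = 0 equals (p^{2s} + (p^{s1} - 1)·G^2)/p^{s1}, where G^2 = (-1)^{((p-1)/2)·s} · p^s is the square of the quadratic Gauss sum of F_{p^s}. -/
open scoped BigOperators


open Finset

section
variable {K : Type} [Field K] [Fintype K] [DecidableEq K]

lemma aux_sq (hK : ringChar K ≠ 2) {a : K} (ha : a ≠ 0) :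
    quadraticChar K a * quadraticChar K a = 1 := by
  have := quadraticChar_sq_one ha
  rwa [sq] at this

lemma jac1 (hK : ringChar K ≠ 2) :
    ∑ t : K, quadraticChar K t * quadraticChar K (1 - t) = - quadraticChar K (-1) := by
  have := jacobiSum_nontrivial_inv (quadraticChar_ne_one hK)
  rwa [(quadraticChar_isQuadratic K).inv, jacobiSum] at this

lemma jac (hK : ringChar K ≠ 2) {c : K} (hc : c ≠ 0) :
    ∑ z : K, quadraticChar K z * quadraticChar K (c - z) = - quadraticChar K (-1) := by
  have h2 : ∑ t : K, quadraticChar K (c * t) * quadraticChar K (c - c * t)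
      = ∑ z : K, quadraticChar K z * quadraticChar K (c - z) :=
    Fintype.sum_equiv (Equiv.mulLeft₀ c hc) _ _ (fun t => by simp [Equiv.mulLeft₀])
  rw [← h2, ← jac1 hK]
  refine Finset.sum_congr rfl fun t _ => ?_
  have h3 : c - c * t = c * (1 - t) := by ring
  rw [h3, map_mul, map_mul, mul_mul_mul_comm, aux_sq hK hc, one_mul]

lemma jac0 (hK : ringChar K ≠ 2) :
    ∑ z : K, quadraticChar K z * quadraticChar K ((0:K) - z)
      = quadraticChar K (-1) * ((Fintype.card K : ℤ) - 1) := by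
  have h : ∀ z : K, quadraticChar K z * quadraticChar K ((0:K) - z)
      = quadraticChar K (-1) * (quadraticChar K z * quadraticChar K z) := by
    intro z
    rw [zero_sub, show -z = -1 * z by ring, map_mul]; ring
  rw [Finset.sum_congr rfl (fun z _ => h z), ← Finset.mul_sum]
  congr 1
  have : ∑ z : K, quadraticChar K z * quadraticChar K z
      = ∑ z ∈ univ \ {(0:K)}, quadraticChar K z * quadraticChar K z
        + quadraticChar K 0 * quadraticChar K 0 :=
    Finset.sum_eq_sum_sdiff_singleton_add (mem_univ (0:K)) _
  rw [this, MulChar.map_zero, mul_zero, add_zero,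
    Finset.sum_congr rfl (fun z hz => aux_sq hK (by
      rw [mem_sdiff, mem_singleton] at hz; exact hz.2)),
    Finset.sum_const, nsmul_eq_mul, mul_one, Finset.card_sdiff_of_subset (by simp),
    card_univ, card_singleton]
  have : 0 < Fintype.card K := Fintype.card_pos
  push_cast [this]
  ring

lemma sumshift (hK : ringChar K ≠ 2) (c : K) :
    ∑ z : K, quadraticChar K (c - z) = 0 := by
  have := Fintype.sum_equiv (Equiv.subLeft c) (fun z : K => quadraticChar K (c - z))
    (quadraticChar K) (fun x => by simp [Equiv.subLeft])
  rw [this]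
  exact quadraticChar_sum_zero hK

lemma countsq (hK : ringChar K ≠ 2) (a : K) :
    (((univ.filter fun x : K => x ^ 2 = a).card : ℕ) : ℤ) = quadraticChar K a + 1 := by
  have := quadraticChar_card_sqrts hK a
  rwa [Set.toFinset_setOf] at this
end

section
variable {K : Type} [Field K] [Fintype K] [DecidableEq K]

lemma Ncard (hK : ringChar K ≠ 2) (c : K) :
    (((univ.filter fun xy : K × K => xy.1 ^ 2 + xy.2 ^ 2 = c).card : ℕ) : ℤ)
      = (Fintype.card K : ℤ) + ∑ z : K, quadraticChar K z * quadraticChar K (c - z) := by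
  have step1 : (univ.filter fun xy : K × K => xy.1 ^ 2 + xy.2 ^ 2 = c).card
      = ∑ y : K, (univ.filter fun x : K => x ^ 2 = c - y ^ 2).card := by
    rw [Finset.card_filter, Fintype.sum_prod_type_right]
    refine Finset.sum_congr rfl fun y _ => ?_
    rw [Finset.card_filter]
    refine Finset.sum_congr rfl fun x _ => ?_
    congr 1
    exact propext eq_sub_iff_add_eq |>.symm
  have step2 : ∑ y : K, quadraticChar K (c - y ^ 2)
      = ∑ z : K, (((univ.filter fun y : K => y ^ 2 = z).card : ℕ) : ℤ)
          * quadraticChar K (c - z) := by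
    rw [← Finset.sum_fiberwise_of_maps_to (g := fun y : K => y ^ 2)
      (fun x (_ : x ∈ univ) => mem_univ (x ^ 2)) (fun y : K => quadraticChar K (c - y ^ 2))]
    refine Finset.sum_congr rfl fun z _ => ?_
    have hcong : ∑ y ∈ univ.filter fun y : K => y ^ 2 = z, quadraticChar K (c - y ^ 2)
        = ∑ _y ∈ univ.filter fun y : K => y ^ 2 = z, quadraticChar K (c - z) :=
      Finset.sum_congr rfl fun y hy => by rw [(Finset.mem_filter.mp hy).2]
    rw [hcong, Finset.sum_const, nsmul_eq_mul]
  have step3 : ∑ z : K, (((univ.filter fun y : K => y ^ 2 = z).card : ℕ) : ℤ)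
        * quadraticChar K (c - z)
      = ∑ z : K, (quadraticChar K z + 1) * quadraticChar K (c - z) :=
    Finset.sum_congr rfl fun z _ => by rw [countsq hK]
  rw [step1]
  push_cast
  rw [Finset.sum_congr rfl (fun y (_ : y ∈ univ) => countsq hK (c - y ^ 2)),
    Finset.sum_add_distrib, Finset.sum_const, card_univ, nsmul_eq_mul, mul_one, step2, step3]
  have : ∑ z : K, (quadraticChar K z + 1) * quadraticChar K (c - z)
      = ∑ z : K, quadraticChar K z * quadraticChar K (c - z)
        + ∑ z : K, quadraticChar K (c - z) := by
    rw [← Finset.sum_add_distrib]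
    exact Finset.sum_congr rfl fun z _ => by ring
  rw [this, sumshift hK, add_zero]
  ring
end


/-- Let `p` be an odd prime, `s ≥ 1` and `s1 ∣ s`. For finite fields
`F1` of cardinality `p^s1` and `K` of cardinality `p^s` with `F1 ⊆ K`, the number of
pairs `(x,y) ∈ K × K` with `Tr_{K/F1}(x² + y²) = 0` equals
`(p^(2s) + (p^s1 - 1) * G²) / p^s1`, where `G² = (-1)^(((p-1)/2)·s) * p^s` is the
square of the quadratic Gauss sum of `K`. (Stated multiplied through by `p^s1`.) -/
theorem stmt0 (p s s1 : ℕ) (hp : p.Prime) (hodd : Odd p) (hs : 0 < s) (hdvd : s1 ∣ s)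
    (hs1 : 0 < s1)
    (F1 K : Type) [Field F1] [Field K] [Fintype F1] [Fintype K] [Algebra F1 K]
    [DecidableEq K] [DecidableEq F1]
    (hcard1 : Fintype.card F1 = p ^ s1) (hcard : Fintype.card K = p ^ s) :
    ((Finset.univ.filter
        (fun xy : K × K => Algebra.trace F1 K (xy.1 ^ 2 + xy.2 ^ 2) = 0)).card : ℤ)
      * p ^ s1
    = p ^ (2 * s) + (p ^ s1 - 1) * ((-1) ^ (((p - 1) / 2) * s) * p ^ s) := by
  classical
  have hp2 : p ≠ 2 := by have := Nat.odd_iff.mp hodd; omega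
  haveI : FiniteDimensional F1 K := Module.Finite.of_finite
  have hchar : ringChar K = p := by
    have h0 : ((Fintype.card K : ℕ) : K) = 0 := Nat.cast_card_eq_zero K
    have hdvd' : ringChar K ∣ p ^ s := by rw [← hcard]; exact ringChar.dvd h0
    have hprime : (ringChar K).Prime := CharP.char_is_prime K (ringChar K)
    exact (Nat.prime_dvd_prime_iff_eq hprime hp).mp (hprime.dvd_of_dvd_pow hdvd')
  have hK : ringChar K ≠ 2 := by rw [hchar]; exact hp2
  have hε : quadraticChar K (-1) = (-1 : ℤ) ^ (((p - 1) / 2) * s) := by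
    have hp1 : p % 2 = 1 := Nat.odd_iff.mp hodd
    rw [quadraticChar_neg_one hK, hcard]
    have hc4 : ((p ^ s : ℕ) : ZMod 4) = ((p : ℕ) : ZMod 4) ^ s := by push_cast; ring
    rw [hc4, map_pow, ZMod.χ₄_eq_neg_one_pow hp1, ← pow_mul]
    have hpp : p / 2 = (p - 1) / 2 := by omega
    rw [hpp]
  set f := Algebra.trace F1 K with hf
  have hsurj : Function.Surjective f := Algebra.trace_surjective F1 K
  have hcardK : Fintype.card K = Fintype.card F1 ^ Module.finrank F1 K := Module.card_eq_pow_finrank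
  have hsd : s = s1 * Module.finrank F1 K := by
    rw [hcard1, hcard, ← pow_mul] at hcardK
    exact Nat.pow_right_injective hp.two_le hcardK
  have hdpos : 0 < Module.finrank F1 K :=
    Nat.pos_of_ne_zero (fun h => by rw [h, Nat.mul_zero] at hsd; omega)
  have hker : Fintype.card (LinearMap.ker f) = Fintype.card F1 ^ (Module.finrank F1 K - 1) := by
    have hrank : Module.finrank F1 (LinearMap.ker f) = Module.finrank F1 K - 1 := by
      have hrn := LinearMap.finrank_range_add_finrank_ker f
      rw [LinearMap.range_eq_top.mpr hsurj, finrank_top, Module.finrank_self] at hrn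
      omega
    rw [Module.card_eq_pow_finrank (K := F1) (V := LinearMap.ker f), hrank]
  set T0 : Finset K := univ.filter (fun c => f c = 0) with hT0def
  have hT0card : T0.card = Fintype.card F1 ^ (Module.finrank F1 K - 1) := by
    rw [← hker, ← Fintype.card_coe T0]
    refine Fintype.card_congr (Equiv.subtypeEquivRight fun x => ?_)
    rw [hT0def, mem_filter, LinearMap.mem_ker]
    simp
  have hn0 : (T0.card : ℤ) * (p : ℤ) ^ s1 = (p : ℤ) ^ s := by
    rw [hT0card, hcard1]
    push_cast
    rw [← pow_mul, ← pow_add]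
    congr 1
    obtain ⟨e, he⟩ := Nat.exists_eq_add_of_le hdpos
    rw [hsd, he, Nat.add_sub_cancel_left]
    ring
  have hmaps : ∀ xy ∈ (univ.filter fun xy : K × K => f (xy.1 ^ 2 + xy.2 ^ 2) = 0),
      (fun xy : K × K => xy.1 ^ 2 + xy.2 ^ 2) xy ∈ T0 := by
    intro xy hxy
    rw [hT0def, mem_filter]
    rw [mem_filter] at hxy
    exact ⟨mem_univ _, hxy.2⟩
  have hfib := Finset.card_eq_sum_card_fiberwise hmaps
  have hfib2 : ∀ c ∈ T0,
      ((univ.filter fun xy : K × K => f (xy.1 ^ 2 + xy.2 ^ 2) = 0).filter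
        (fun xy : K × K => (fun xy : K × K => xy.1 ^ 2 + xy.2 ^ 2) xy = c)).card
      = (univ.filter fun xy : K × K => xy.1 ^ 2 + xy.2 ^ 2 = c).card := by
    intro c hc
    rw [hT0def, mem_filter] at hc
    congr 1
    ext xy
    simp only [mem_filter, mem_univ, true_and]
    exact ⟨fun h => h.2, fun h => ⟨by rw [h]; exact hc.2, h⟩⟩
  have hsplit : (((univ.filter fun xy : K × K => f (xy.1 ^ 2 + xy.2 ^ 2) = 0).card : ℕ) : ℤ)
      = ∑ c ∈ T0, ((Fintype.card K : ℤ)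
          + ∑ z : K, quadraticChar K z * quadraticChar K (c - z)) := by
    rw [hfib, Finset.sum_congr rfl hfib2]
    push_cast
    exact Finset.sum_congr rfl fun c _ => Ncard hK c
  have h0T : (0 : K) ∈ T0 := by
    rw [hT0def, mem_filter]
    exact ⟨mem_univ _, map_zero f⟩
  have hposT : 1 ≤ T0.card := Finset.card_pos.mpr ⟨0, h0T⟩
  have hsum : ∑ c ∈ T0, (∑ z : K, quadraticChar K z * quadraticChar K (c - z))
      = quadraticChar K (-1) * ((Fintype.card K : ℤ) - 1)
        + ((T0.card : ℤ) - 1) * (- quadraticChar K (-1)) := by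
    rw [← Finset.add_sum_erase _ _ h0T, jac0 hK]
    congr 1
    rw [Finset.sum_congr rfl (fun c hc => jac hK (Finset.ne_of_mem_erase hc)),
      Finset.sum_const, Finset.card_erase_of_mem h0T, nsmul_eq_mul,
      Nat.cast_sub hposT, Nat.cast_one]
  rw [hsplit, Finset.sum_add_distrib, Finset.sum_const, hsum, nsmul_eq_mul, hcard, hε]
  have hq1 : (1 : ℤ) ≤ (p : ℤ) ^ s1 := one_le_pow₀ (by exact_mod_cast hp.one_lt.le)
  push_cast
  linear_combination ((p : ℤ) ^ s - (-1 : ℤ) ^ (((p - 1) / 2) * s)) * hn0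
end

section
/- Let p be an odd prime and s1 | s2 be positive integers with s2/s1 odd. Fix μ ∈ F_{p^{s2}}^* and ρ ∈ F_{p^{s1}}. Let N(c,ρ) = #{c ∈ F_{p^{s2}}^* : Tr_{F_{p^{s2}}/F_{p^{s1}}}(μ^{-1} c^2) = ρ}. Then N(c,ρ) = p^{s2-s1} - 1 if ρ = 0, and N(c,ρ) = p^{s2-s1} + η''(μ)·η'(-ρ)·G'·G''/p^{s1} if ρ ≠ 0, where η'', η' are the quadratic characters of F_{p^{s2}}, F_{p^{s1}} and G'', G' the corresponding quadratic Gauss sums. -/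
open scoped BigOperators

attribute [local instance] ZMod.algebra

noncomputable section

/-- The canonical additive character of a finite field `F` of characteristic `p`. -/
def canonChar (p : ℕ) (F : Type) [Field F] [Fintype F] [CharP F p] (x : F) : ℂ :=
  Complex.exp (2 * Real.pi * Complex.I / p) ^ (Algebra.trace (ZMod p) F x).val

/-- The quadratic character of a finite field, extended by `η(0) = 0`. -/
def quadChar (F : Type) [Field F] [Fintype F] [DecidableEq F] (x : F) : ℂ :=
  if x = 0 then 0 else if IsSquare x then 1 else -1

/-- The quadratic Gauss sum of a finite field of characteristic `p`. -/
def quadGaussSum (p : ℕ) (F : Type) [Field F] [Fintype F] [DecidableEq F] [CharP F p] : ℂ :=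
  ∑ c : F, quadChar F c * canonChar p F c

section Aux

/-- `canonChar` as a bundled additive character. -/
def canonAddChar (p : ℕ) [NeZero p] (F : Type) [Field F] [Fintype F] [CharP F p] :
    AddChar F ℂ :=
  (AddChar.zmodChar p (Complex.isPrimitiveRoot_exp p (NeZero.ne p)).pow_eq_one).compAddMonoidHom
    (Algebra.trace (ZMod p) F).toAddMonoidHom

lemma canonAddChar_apply (p : ℕ) [NeZero p] (F : Type) [Field F] [Fintype F] [CharP F p]
    (x : F) : canonAddChar p F x = canonChar p F x := rfl

/-- `quadChar` as a bundled multiplicative character. -/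
def qchar (F : Type) [Field F] [Fintype F] [DecidableEq F] : MulChar F ℂ :=
  (quadraticChar F).ringHomComp (Int.castRingHom ℂ)

lemma qchar_apply (F : Type) [Field F] [Fintype F] [DecidableEq F] (x : F) :
    qchar F x = quadChar F x := by
  simp only [qchar, MulChar.ringHomComp_apply, quadraticChar_apply, quadraticCharFun, quadChar]
  split_ifs <;> simp

lemma qchar_eq_int_cast (F : Type) [Field F] [Fintype F] [DecidableEq F] (x : F) :
    qchar F x = ((quadraticChar F x : ℤ) : ℂ) := rfl

lemma quadGaussSum_eq (p : ℕ) [NeZero p] (F : Type) [Field F] [Fintype F] [DecidableEq F]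
    [CharP F p] : quadGaussSum p F = gaussSum (qchar F) (canonAddChar p F) := by
  unfold quadGaussSum gaussSum
  exact Finset.sum_congr rfl fun c _ => by rw [qchar_apply, canonAddChar_apply]

lemma canonAddChar_trace (p : ℕ) [NeZero p] [Fact p.Prime] (F1 F2 : Type) [Field F1] [Field F2]
    [Fintype F1] [Fintype F2] [CharP F1 p] [CharP F2 p] [Algebra F1 F2]
    [IsScalarTower (ZMod p) F1 F2] (y : F2) :
    canonAddChar p F1 (Algebra.trace F1 F2 y) = canonAddChar p F2 y := by
  rw [canonAddChar_apply, canonAddChar_apply]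
  unfold canonChar
  rw [Algebra.trace_trace]

lemma exists_trace_ne_zero (p : ℕ) (F : Type) [Field F] [Fintype F] [CharP F p]
    (hp : p.Prime) : ∃ b : F, Algebra.trace (ZMod p) F b ≠ 0 := by
  have hchar : ringChar F = p := ringChar.eq F p
  subst hchar
  obtain ⟨b, hb⟩ := FiniteField.trace_to_zmod_nondegenerate F (one_ne_zero (α := F))
  rw [one_mul] at hb
  exact ⟨b, hb⟩

lemma canonAddChar_ne_one (p : ℕ) [NeZero p] (F : Type) [Field F] [Fintype F] [CharP F p]
    (hp : p.Prime) : canonAddChar p F ≠ 1 := by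
  obtain ⟨b, hb⟩ := exists_trace_ne_zero p F hp
  intro h
  have h1 : canonChar p F b = 1 := by
    rw [← canonAddChar_apply, h, AddChar.one_apply]
  have hval : (Algebra.trace (ZMod p) F b).val ≠ 0 := by
    simpa [ZMod.val_eq_zero] using hb
  have hlt := ZMod.val_lt (Algebra.trace (ZMod p) F b)
  exact (Complex.isPrimitiveRoot_exp p (NeZero.ne p)).pow_ne_one_of_pos_of_lt
    hval hlt h1

lemma canonAddChar_isPrimitive (p : ℕ) [NeZero p] (F : Type) [Field F] [Fintype F] [CharP F p]
    (hp : p.Prime) : (canonAddChar p F).IsPrimitive :=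
  AddChar.IsPrimitive.of_ne_one (canonAddChar_ne_one p F hp)

lemma qchar_sq_one (F : Type) [Field F] [Fintype F] [DecidableEq F] {b : F} (hb : b ≠ 0) :
    qchar F b * qchar F b = 1 := by
  rw [qchar_eq_int_cast, ← Int.cast_mul, ← sq, quadraticChar_sq_one hb, Int.cast_one]

lemma qchar_ne_one (F : Type) [Field F] [Fintype F] [DecidableEq F]
    (hF : ringChar F ≠ 2) : qchar F ≠ 1 := by
  obtain ⟨u, hu⟩ := quadraticChar_exists_neg_one' hF
  intro h
  have h1 : qchar F u = 1 := by rw [h, MulChar.one_apply_coe]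
  rw [qchar_eq_int_cast, hu] at h1
  norm_num at h1

/-- The key quadratic exponential sum evaluation:
`∑ c, ψ (b c²) = χ(b) · G(χ, ψ)` for `b ≠ 0`. -/
lemma sum_quad_mulShift (F : Type) [Field F] [Fintype F] [DecidableEq F]
    (hF : ringChar F ≠ 2) (ψ : AddChar F ℂ) (hψ : ψ.IsPrimitive) {b : F} (hb : b ≠ 0) :
    ∑ c : F, ψ (b * c ^ 2) = qchar F b * gaussSum (qchar F) ψ := by
  have hfib : ∑ c : F, ψ (b * c ^ 2)
      = ∑ x : F, ((Finset.univ.filter fun c : F => c ^ 2 = x).card : ℂ) * ψ (b * x) := by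
    rw [eq_comm]
    calc ∑ x : F, ((Finset.univ.filter fun c : F => c ^ 2 = x).card : ℂ) * ψ (b * x)
        = ∑ x : F, ∑ _c ∈ Finset.univ.filter fun c : F => c ^ 2 = x, ψ (b * x) := by
          refine Finset.sum_congr rfl fun x _ => ?_
          rw [Finset.sum_const, nsmul_eq_mul]
      _ = ∑ c : F, ψ (b * c ^ 2) :=
          Finset.sum_fiberwise' Finset.univ (fun c : F => c ^ 2) (fun x => ψ (b * x))
  have hcardsq : ∀ x : F,
      ((Finset.univ.filter fun c : F => c ^ 2 = x).card : ℂ) = qchar F x + 1 := by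
    intro x
    have h := quadraticChar_card_sqrts hF x
    rw [show {y : F | y ^ 2 = x}.toFinset = Finset.univ.filter (fun c : F => c ^ 2 = x) by
      ext c; simp] at h
    have h2 := congrArg (fun n : ℤ => (n : ℂ)) h
    push_cast at h2
    rw [h2, qchar_eq_int_cast]
  rw [hfib]
  have hsplit : ∑ x : F, ((Finset.univ.filter fun c : F => c ^ 2 = x).card : ℂ) * ψ (b * x)
      = (∑ x : F, qchar F x * ψ (b * x)) + ∑ x : F, ψ (b * x) := by
    rw [← Finset.sum_add_distrib]
    refine Finset.sum_congr rfl fun x _ => ?_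
    rw [hcardsq x]; ring
  rw [hsplit]
  have hzero : ∑ x : F, ψ (b * x) = 0 := by
    have h := AddChar.sum_mulShift b hψ
    rw [if_neg hb] at h
    have h2 : ∑ x : F, ψ (b * x) = ∑ x : F, ψ (x * b) :=
      Finset.sum_congr rfl fun x _ => by rw [mul_comm]
    rw [h2, h]; norm_num
  have hgauss : ∑ x : F, qchar F x * ψ (b * x) = qchar F b * gaussSum (qchar F) ψ := by
    have h1 : ∑ x : F, qchar F x * ψ (b * x) = gaussSum (qchar F) (ψ.mulShift b) := by
      unfold gaussSum
      exact Finset.sum_congr rfl fun x _ => by rw [AddChar.mulShift_apply]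
    have h2 := gaussSum_mulShift (qchar F) ψ (Units.mk0 b hb)
    have h3 : (ψ.mulShift ((Units.mk0 b hb : Fˣ) : F)) = ψ.mulShift b := rfl
    rw [h3] at h2
    have h4 : ((Units.mk0 b hb : Fˣ) : F) = b := rfl
    rw [h4] at h2
    rw [h1, ← h2, ← mul_assoc, qchar_sq_one F hb, one_mul]
  rw [hzero, hgauss, add_zero]

/-- Restriction of the quadratic character along an odd-degree extension of finite fields. -/
lemma quadraticChar_algebraMap (p s1 s2 : ℕ) (hp : p.Prime) (hodd : Odd p) (hs1 : 0 < s1)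
    (hdvd : s1 ∣ s2) (hquot : Odd (s2 / s1))
    (F1 F2 : Type) [Field F1] [Field F2] [Fintype F1] [Fintype F2]
    [DecidableEq F1] [DecidableEq F2] [CharP F1 p] [CharP F2 p] [Algebra F1 F2]
    (hcard1 : Fintype.card F1 = p ^ s1) (hcard2 : Fintype.card F2 = p ^ s2)
    (a : F1) : quadraticChar F2 (algebraMap F1 F2 a) = quadraticChar F1 a := by
  have hp2 : p ≠ 2 := by
    rintro rfl
    simp [Nat.odd_iff] at hodd
  have hF1 : ringChar F1 ≠ 2 := by rw [ringChar.eq F1 p]; exact hp2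
  have hF2 : ringChar F2 ≠ 2 := by rw [ringChar.eq F2 p]; exact hp2
  by_cases ha : a = 0
  · simp [ha]
  have hinj : Function.Injective (algebraMap F1 F2) := (algebraMap F1 F2).injective
  have ha2 : algebraMap F1 F2 a ≠ 0 := fun h => ha (hinj (by rw [h, map_zero]))
  set k := s2 / s1 with hk
  have hks : s1 * k = s2 := Nat.mul_div_cancel' hdvd
  set q1 := p ^ s1 with hq1def
  set m := ∑ i ∈ Finset.range k, q1 ^ i with hm
  have hpodd : p % 2 = 1 := Nat.odd_iff.mp hodd
  have hq1odd : q1 % 2 = 1 := Nat.odd_iff.mp (hodd.pow)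
  have hmodd : m % 2 = 1 := by
    rw [hm, Finset.sum_nat_mod]
    have hterm : ∀ i ∈ Finset.range k, q1 ^ i % 2 = 1 :=
      fun i _ => Nat.odd_iff.mp ((Nat.odd_iff.mpr hq1odd).pow)
    rw [Finset.sum_congr rfl hterm, Finset.sum_const, Finset.card_range, smul_eq_mul, mul_one]
    have := Nat.odd_iff.mp hquot
    omega

  have hq1pos : 1 ≤ q1 := Nat.one_le_pow _ _ hp.pos
  have hq2 : p ^ s2 = q1 ^ k := by rw [hq1def, ← pow_mul, hks]
  have hq2pos : 1 ≤ q1 ^ k := Nat.one_le_pow _ _ (lt_of_lt_of_le Nat.zero_lt_one hq1pos)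
  have hmz : (m : ℤ) = ∑ i ∈ Finset.range k, (q1 : ℤ) ^ i := by rw [hm]; push_cast; rfl
  have hgeom : (q1 : ℤ) ^ k - 1 = ((q1 : ℤ) - 1) * (m : ℤ) := by
    rw [hmz, ← geom_sum_mul (q1 : ℤ) k]; ring
  have h2 : q1 ^ k - 1 = (q1 - 1) * m := by
    zify [hq1pos, hq2pos]
    exact hgeom
  obtain ⟨t, ht⟩ : ∃ t, q1 = 2 * t + 1 := ⟨q1 / 2, by omega⟩
  have e1 : Fintype.card F1 / 2 = t := by rw [hcard1]; omega
  have e2 : Fintype.card F2 / 2 = t * m := by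
    rw [hcard2, hq2]
    have h3 : (q1 - 1) * m = 2 * (t * m) := by
      rw [show q1 - 1 = 2 * t by omega]; ring
    omega
  by_cases hsq : IsSquare a
  · obtain ⟨r, hr⟩ := hsq
    have hsq2 : IsSquare (algebraMap F1 F2 a) := ⟨algebraMap F1 F2 r, by rw [hr, map_mul]⟩
    rw [(quadraticChar_one_iff_isSquare ha2).mpr hsq2,
      (quadraticChar_one_iff_isSquare ha).mpr ⟨r, hr⟩]
  · have h1 : quadraticChar F1 a = -1 := quadraticChar_neg_one_iff_not_isSquare.mpr hsq
    rw [h1]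
    have hpow1 : a ^ t = -1 := by
      have hq := quadraticChar_eq_pow_of_char_ne_two' hF1 a
      rw [h1, e1] at hq
      push_cast at hq
      exact hq.symm
    have hpow2 : (algebraMap F1 F2 a) ^ (Fintype.card F2 / 2) = -1 := by
      rw [e2]
      calc (algebraMap F1 F2 a) ^ (t * m) = (algebraMap F1 F2 (a ^ t)) ^ m := by
            rw [map_pow, pow_mul]
        _ = (algebraMap F1 F2 (-1)) ^ m := by rw [hpow1]
        _ = (-1 : F2) ^ m := by rw [map_neg, map_one]
        _ = -1 := Odd.neg_one_pow (Nat.odd_iff.mpr hmodd)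
    have hq := quadraticChar_eq_pow_of_char_ne_two' hF2 (algebraMap F1 F2 a)
    rw [hpow2] at hq
    rcases quadraticChar_dichotomy ha2 with h | h
    · exfalso
      rw [h] at hq
      push_cast at hq
      have h2F : (2 : F2) = 0 := by linear_combination hq
      have hdvd2 := (CharP.cast_eq_zero_iff F2 p 2).mp h2F
      have hle2 := Nat.le_of_dvd (by norm_num) hdvd2
      exact hp2 (le_antisymm hle2 hp.two_le)
    · exact h

end Aux

/-- with `s1 ∣ s2`, `s2/s1` odd, `μ ∈ F_{p^{s2}}^*`, `ρ ∈ F_{p^{s1}}`,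
the number of `c ∈ F_{p^{s2}}^*` with `Tr_{F_{p^{s2}}/F_{p^{s1}}}(μ⁻¹ c²) = ρ` equals
`p^{s2-s1} - 1` if `ρ = 0` and `p^{s2-s1} + η''(μ)η'(-ρ)G'G''/p^{s1}` if `ρ ≠ 0`. -/
theorem stmt4 (p s1 s2 : ℕ) (hp : p.Prime) (hodd : Odd p) (hs1 : 0 < s1)
    (hdvd : s1 ∣ s2) (hquot : Odd (s2 / s1))
    (F1 F2 : Type) [Field F1] [Field F2] [Fintype F1] [Fintype F2]
    [DecidableEq F1] [DecidableEq F2] [CharP F1 p] [CharP F2 p] [Algebra F1 F2]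
    (hcard1 : Fintype.card F1 = p ^ s1) (hcard2 : Fintype.card F2 = p ^ s2)
    (μ : F2) (hμ : μ ≠ 0) (ρ : F1) :
    (ρ = 0 →
      ((Finset.univ.filter (fun c : F2 => c ≠ 0 ∧ Algebra.trace F1 F2 (μ⁻¹ * c ^ 2) = ρ)).card : ℂ)
        = p ^ (s2 - s1) - 1) ∧
    (ρ ≠ 0 →
      ((Finset.univ.filter (fun c : F2 => c ≠ 0 ∧ Algebra.trace F1 F2 (μ⁻¹ * c ^ 2) = ρ)).card : ℂ)
        = p ^ (s2 - s1) +
          quadChar F2 μ * quadChar F1 (-ρ) * quadGaussSum p F1 * quadGaussSum p F2 / p ^ s1) := by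
  haveI : Fact p.Prime := ⟨hp⟩
  haveI : NeZero p := ⟨hp.ne_zero⟩
  haveI : IsScalarTower (ZMod p) F1 F2 :=
    IsScalarTower.of_algebraMap_eq' (Subsingleton.elim _ _)
  have hp2 : p ≠ 2 := by rintro rfl; simp [Nat.odd_iff] at hodd
  have hF1 : ringChar F1 ≠ 2 := by rw [ringChar.eq F1 p]; exact hp2
  have hF2 : ringChar F2 ≠ 2 := by rw [ringChar.eq F2 p]; exact hp2
  have hle : s1 ≤ s2 := by
    by_contra h
    rw [Nat.div_eq_of_lt (Nat.lt_of_not_le h)] at hquot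
    simp at hquot
  have hψ1p : (canonAddChar p F1).IsPrimitive := canonAddChar_isPrimitive p F1 hp
  have hψ2p : (canonAddChar p F2).IsPrimitive := canonAddChar_isPrimitive p F2 hp
  have hq1ne : (Fintype.card F1 : ℂ) ≠ 0 := Nat.cast_ne_zero.mpr Fintype.card_ne_zero
  have hinj : Function.Injective (algebraMap F1 F2) := (algebraMap F1 F2).injective
  -- trace compatibility
  have htr : ∀ (a : F1) (x : F2),
      canonAddChar p F1 (a * Algebra.trace F1 F2 x)
        = canonAddChar p F2 (algebraMap F1 F2 a * x) := by
    intro a x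
    have h1 : a * Algebra.trace F1 F2 x = Algebra.trace F1 F2 (algebraMap F1 F2 a * x) := by
      rw [← Algebra.smul_def, map_smul, smul_eq_mul]
    rw [h1]
    exact canonAddChar_trace p F1 F2 _
  -- restriction of the quadratic character
  have hres : ∀ a : F1, qchar F2 (algebraMap F1 F2 a) = qchar F1 a := by
    intro a
    rw [qchar_eq_int_cast, qchar_eq_int_cast,
      quadraticChar_algebraMap p s1 s2 hp hodd hs1 hdvd hquot F1 F2 hcard1 hcard2 a]
  -- χ₂(μ⁻¹) = χ₂(μ)
  have hμinv : qchar F2 μ⁻¹ = qchar F2 μ := by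
    rw [qchar_eq_int_cast, qchar_eq_int_cast]
    have h1 : quadraticChar F2 μ⁻¹ * quadraticChar F2 μ = 1 := by
      rw [← map_mul, inv_mul_cancel₀ hμ, map_one]
    rcases quadraticChar_dichotomy (inv_ne_zero hμ) with h | h <;>
      rcases quadraticChar_dichotomy hμ with h' | h' <;>
        rw [h, h'] <;> rw [h, h'] at h1 <;> norm_num at h1
  -- the indicator function via additive characters
  have hcount : ∀ t : F1, (if t = ρ then (1 : ℂ) else 0)
      = (Fintype.card F1 : ℂ)⁻¹ * ∑ a : F1, canonAddChar p F1 (a * (t - ρ)) := by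
    intro t
    rw [AddChar.sum_mulShift _ hψ1p]
    by_cases h : t = ρ
    · rw [if_pos h, if_pos (show t - ρ = 0 by rw [h, sub_self]), inv_mul_cancel₀ hq1ne]
    · rw [if_neg h, if_neg (show ¬t - ρ = 0 from fun hc => h (sub_eq_zero.mp hc))]
      norm_num
  -- inner sum over c ≠ 0, for a ≠ 0
  have hS : ∀ a : F1, a ≠ 0 →
      (∑ c ∈ Finset.univ.filter (fun c : F2 => c ≠ 0),
          canonAddChar p F2 ((algebraMap F1 F2 a * μ⁻¹) * c ^ 2))
        = qchar F1 a * qchar F2 μ * gaussSum (qchar F2) (canonAddChar p F2) - 1 := by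
    intro a ha
    have ha2 : algebraMap F1 F2 a ≠ 0 := fun h => ha (hinj (by rw [h, map_zero]))
    have hb : algebraMap F1 F2 a * μ⁻¹ ≠ 0 := mul_ne_zero ha2 (inv_ne_zero hμ)
    have hfull := sum_quad_mulShift F2 hF2 (canonAddChar p F2) hψ2p hb
    have hsplit := Finset.add_sum_erase Finset.univ
      (fun c : F2 => canonAddChar p F2 ((algebraMap F1 F2 a * μ⁻¹) * c ^ 2))
      (Finset.mem_univ 0)
    rw [Finset.filter_ne']
    beta_reduce at hsplit
    have hzeroterm : canonAddChar p F2 ((algebraMap F1 F2 a * μ⁻¹) * (0 : F2) ^ 2) = 1 := by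
      rw [zero_pow (by norm_num), mul_zero, AddChar.map_zero_eq_one]
    rw [hzeroterm] at hsplit
    have : ∑ c ∈ Finset.univ.erase (0 : F2),
        canonAddChar p F2 ((algebraMap F1 F2 a * μ⁻¹) * c ^ 2)
        = qchar F2 (algebraMap F1 F2 a * μ⁻¹) * gaussSum (qchar F2) (canonAddChar p F2) - 1 := by
      rw [← hfull, ← hsplit]; ring
    rw [this, map_mul, hres a, hμinv]
  -- inner sum over c ≠ 0, for a = 0
  have hS0 : (∑ c ∈ Finset.univ.filter (fun c : F2 => c ≠ 0),
      canonAddChar p F2 ((algebraMap F1 F2 (0 : F1) * μ⁻¹) * c ^ 2))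
      = (Fintype.card F2 : ℂ) - 1 := by
    have : ∀ c : F2, canonAddChar p F2 ((algebraMap F1 F2 (0 : F1) * μ⁻¹) * c ^ 2) = 1 := by
      intro c
      rw [map_zero, zero_mul, zero_mul, AddChar.map_zero_eq_one]
    rw [Finset.sum_congr rfl fun c _ => this c, Finset.sum_const, Finset.filter_ne',
      Finset.card_erase_of_mem (Finset.mem_univ 0), Finset.card_univ, nsmul_eq_mul, mul_one]
    have h1 : (1 : ℕ) ≤ Fintype.card F2 := Fintype.card_pos
    push_cast [Nat.cast_sub h1]
    ring
  -- the sum A over a ≠ 0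
  have hA : ∑ a ∈ Finset.univ.erase (0 : F1), canonAddChar p F1 (-(a * ρ))
      = (if ρ = 0 then (Fintype.card F1 : ℂ) else 0) - 1 := by
    have hfull : ∑ a : F1, canonAddChar p F1 (-(a * ρ))
        = if ρ = 0 then (Fintype.card F1 : ℂ) else 0 := by
      have h1 : ∀ a : F1, -(a * ρ) = a * (-ρ) := fun a => by ring
      rw [Finset.sum_congr rfl fun a _ => by rw [h1 a]]
      rw [AddChar.sum_mulShift _ hψ1p]
      by_cases h : ρ = 0 <;> simp [h]
    have hsplit := Finset.add_sum_erase Finset.univ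
      (fun a : F1 => canonAddChar p F1 (-(a * ρ))) (Finset.mem_univ 0)
    beta_reduce at hsplit
    rw [show -((0 : F1) * ρ) = 0 by ring, AddChar.map_zero_eq_one] at hsplit
    rw [← hfull, ← hsplit]; ring
  -- the sum B over a ≠ 0
  have hB : ∑ a ∈ Finset.univ.erase (0 : F1), qchar F1 a * canonAddChar p F1 (-(a * ρ))
      = if ρ = 0 then 0 else qchar F1 (-ρ) * gaussSum (qchar F1) (canonAddChar p F1) := by
    have hfull : ∑ a ∈ Finset.univ.erase (0 : F1), qchar F1 a * canonAddChar p F1 (-(a * ρ))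
        = ∑ a : F1, qchar F1 a * canonAddChar p F1 ((-ρ) * a) := by
      have hsplit := Finset.add_sum_erase Finset.univ
        (fun a : F1 => qchar F1 a * canonAddChar p F1 (-(a * ρ))) (Finset.mem_univ 0)
      beta_reduce at hsplit
      have hz : qchar F1 (0 : F1) * canonAddChar p F1 (-((0 : F1) * ρ)) = 0 := by
        rw [MulChar.map_zero, zero_mul]
      rw [hz, zero_add] at hsplit
      rw [hsplit]
      exact Finset.sum_congr rfl fun a _ => by rw [show -(a * ρ) = (-ρ) * a by ring]
    rw [hfull]
    by_cases h : ρ = 0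
    · rw [if_pos h]
      have : ∀ a : F1, qchar F1 a * canonAddChar p F1 ((-ρ) * a) = qchar F1 a := by
        intro a
        rw [h, neg_zero, zero_mul, AddChar.map_zero_eq_one, mul_one]
      rw [Finset.sum_congr rfl fun a _ => this a]
      exact MulChar.sum_eq_zero_of_ne_one (qchar_ne_one F1 hF1)
    · rw [if_neg h]
      have hne : (-ρ) ≠ 0 := neg_ne_zero.mpr h
      have h1 : ∑ a : F1, qchar F1 a * canonAddChar p F1 ((-ρ) * a)
          = gaussSum (qchar F1) ((canonAddChar p F1).mulShift (-ρ)) := by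
        unfold gaussSum
        exact Finset.sum_congr rfl fun a _ => by rw [AddChar.mulShift_apply]
      have h2 := gaussSum_mulShift (qchar F1) (canonAddChar p F1) (Units.mk0 (-ρ) hne)
      have h3 : ((canonAddChar p F1).mulShift ((Units.mk0 (-ρ) hne : F1ˣ) : F1))
          = (canonAddChar p F1).mulShift (-ρ) := rfl
      have h4 : ((Units.mk0 (-ρ) hne : F1ˣ) : F1) = -ρ := rfl
      rw [h3, h4] at h2
      rw [h1, ← h2, ← mul_assoc, qchar_sq_one F1 hne, one_mul]
  -- the master formula
  have key : ((Finset.univ.filter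
      (fun c : F2 => c ≠ 0 ∧ Algebra.trace F1 F2 (μ⁻¹ * c ^ 2) = ρ)).card : ℂ)
      = (Fintype.card F1 : ℂ)⁻¹ * (((Fintype.card F2 : ℂ) - 1)
        + ((qchar F2 μ * gaussSum (qchar F2) (canonAddChar p F2))
            * (if ρ = 0 then 0 else qchar F1 (-ρ) * gaussSum (qchar F1) (canonAddChar p F1))
          - ((if ρ = 0 then (Fintype.card F1 : ℂ) else 0) - 1))) := by
    have step0 : ((Finset.univ.filter
        (fun c : F2 => c ≠ 0 ∧ Algebra.trace F1 F2 (μ⁻¹ * c ^ 2) = ρ)).card : ℂ)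
        = ∑ c ∈ Finset.univ.filter (fun c : F2 => c ≠ 0),
            (if Algebra.trace F1 F2 (μ⁻¹ * c ^ 2) = ρ then (1 : ℂ) else 0) := by
      rw [← Finset.filter_filter, Finset.card_filter]
      push_cast
      exact Finset.sum_congr rfl fun c _ => by split_ifs <;> norm_num
    rw [step0, Finset.sum_congr rfl fun c _ => hcount _, ← Finset.mul_sum]
    congr 1
    rw [Finset.sum_comm]
    have step2 : ∑ a : F1, ∑ c ∈ Finset.univ.filter (fun c : F2 => c ≠ 0),
        canonAddChar p F1 (a * (Algebra.trace F1 F2 (μ⁻¹ * c ^ 2) - ρ))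
        = ∑ a : F1, canonAddChar p F1 (-(a * ρ))
            * ∑ c ∈ Finset.univ.filter (fun c : F2 => c ≠ 0),
                canonAddChar p F2 ((algebraMap F1 F2 a * μ⁻¹) * c ^ 2) := by
      refine Finset.sum_congr rfl fun a _ => ?_
      rw [Finset.mul_sum]
      refine Finset.sum_congr rfl fun c _ => ?_
      rw [show a * (Algebra.trace F1 F2 (μ⁻¹ * c ^ 2) - ρ)
          = -(a * ρ) + a * Algebra.trace F1 F2 (μ⁻¹ * c ^ 2) by ring,
        AddChar.map_add_eq_mul, htr a (μ⁻¹ * c ^ 2),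
        show algebraMap F1 F2 a * (μ⁻¹ * c ^ 2) = (algebraMap F1 F2 a * μ⁻¹) * c ^ 2 by ring]
    rw [step2]
    have hsplit := Finset.add_sum_erase Finset.univ
      (fun a : F1 => canonAddChar p F1 (-(a * ρ))
        * ∑ c ∈ Finset.univ.filter (fun c : F2 => c ≠ 0),
            canonAddChar p F2 ((algebraMap F1 F2 a * μ⁻¹) * c ^ 2)) (Finset.mem_univ 0)
    rw [← hsplit]
    beta_reduce
    rw [show -((0 : F1) * ρ) = 0 by ring, AddChar.map_zero_eq_one, hS0, one_mul]
    have herase : ∑ a ∈ Finset.univ.erase (0 : F1), canonAddChar p F1 (-(a * ρ))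
        * ∑ c ∈ Finset.univ.filter (fun c : F2 => c ≠ 0),
            canonAddChar p F2 ((algebraMap F1 F2 a * μ⁻¹) * c ^ 2)
        = ∑ a ∈ Finset.univ.erase (0 : F1), canonAddChar p F1 (-(a * ρ))
            * (qchar F1 a * qchar F2 μ * gaussSum (qchar F2) (canonAddChar p F2) - 1) := by
      refine Finset.sum_congr rfl fun a ha => ?_
      rw [hS a (Finset.mem_erase.mp ha).1]
    rw [herase]
    have hexpand : ∑ a ∈ Finset.univ.erase (0 : F1), canonAddChar p F1 (-(a * ρ))
        * (qchar F1 a * qchar F2 μ * gaussSum (qchar F2) (canonAddChar p F2) - 1)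
        = (qchar F2 μ * gaussSum (qchar F2) (canonAddChar p F2))
            * ∑ a ∈ Finset.univ.erase (0 : F1), qchar F1 a * canonAddChar p F1 (-(a * ρ))
          - ∑ a ∈ Finset.univ.erase (0 : F1), canonAddChar p F1 (-(a * ρ)) := by
      rw [Finset.mul_sum, ← Finset.sum_sub_distrib]
      exact Finset.sum_congr rfl fun a _ => by ring
    rw [hexpand, hA, hB]
  have hpne : (p : ℂ) ≠ 0 := Nat.cast_ne_zero.mpr hp.ne_zero
  have hps1 : (p : ℂ) ^ s1 ≠ 0 := pow_ne_zero _ hpne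
  have hpow : ((p : ℂ)) ^ (s2 - s1) = (p : ℂ) ^ s2 / (p : ℂ) ^ s1 := by
    rw [pow_sub₀ _ hpne hle, div_eq_mul_inv]
  constructor
  · intro hρ
    rw [key, if_pos hρ, if_pos hρ, hcard1, hcard2]
    push_cast
    rw [hpow]
    field_simp
    ring
  · intro hρ
    rw [key, if_neg hρ, if_neg hρ, hcard1, hcard2,
      ← quadGaussSum_eq p F1, ← quadGaussSum_eq p F2, qchar_apply, qchar_apply]
    push_cast
    rw [hpow]
    field_simp
    ring
end
end

section
/- Let p be an odd prime, s a positive integer, and s1, s2 divisors of s with s2 | s1. If a = b = 0, then the number of pairs (x,y) ∈ F_{p^s}^2 with Tr_{F_{p^s}/F_{p^{s1}}}(x^2+y^2)=0 and Tr_{F_{p^s}/F_{p^{s2}}}(ax+by)+c=0 equals p^{2s-s1} + p^{-s1}(p^{s1}-1)G^2 if c = 0, and equals 0 if c ≠ 0, where G^2 = (-1)^{((p-1)/2)s} p^s. -/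
open scoped BigOperators
open Finset

lemma sum_sq_expand {L : Type} [Field L] [Fintype L] [DecidableEq L] (hL : ringChar L ≠ 2)
    (f : L → ℤ) :
    ∑ x : L, f (x ^ 2) = ∑ u : L, ((quadraticChar L u : ℤ) + 1) * f u := by
  rw [← Finset.sum_fiberwise univ (fun x : L => x ^ 2) (fun x => f (x ^ 2))]
  refine Finset.sum_congr rfl fun u _ => ?_
  have h1 : ∑ x ∈ univ.filter (fun x : L => x ^ 2 = u), f (x ^ 2)
      = ∑ x ∈ univ.filter (fun x : L => x ^ 2 = u), f u :=
    Finset.sum_congr rfl fun x hx => by rw [(Finset.mem_filter.mp hx).2]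
  rw [h1, Finset.sum_const, nsmul_eq_mul]
  congr 1
  have := quadraticChar_card_sqrts hL u
  rw [← this]
  congr 1
  rw [Set.toFinset_setOf]

lemma count_sq_add_sq {L : Type} [Field L] [Fintype L] [DecidableEq L] (hL : ringChar L ≠ 2)
    (w : L) :
    (((univ.filter (fun xy : L × L => xy.1 ^ 2 + xy.2 ^ 2 = w)).card : ℤ)) =
      (Fintype.card L : ℤ) +
        (quadraticChar L (-1) : ℤ) * (if w = 0 then (Fintype.card L : ℤ) - 1 else -1) := by
  classical
  set χ := quadraticChar L with hχ
  have hiff : ∀ x y : L, (x ^ 2 + y ^ 2 = w) ↔ (y ^ 2 = w - x ^ 2) := fun x y => by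
    rw [eq_sub_iff_add_eq, add_comm]
  have h0 : (univ.filter (fun xy : L × L => xy.1 ^ 2 + xy.2 ^ 2 = w)).card
      = ∑ x : L, (univ.filter (fun y : L => y ^ 2 = w - x ^ 2)).card := by
    rw [Finset.card_filter, Fintype.sum_prod_type]
    refine Finset.sum_congr rfl fun x _ => ?_
    rw [Finset.card_filter]
    exact Finset.sum_congr rfl fun y _ => if_congr (hiff x y) rfl rfl
  have h1 : ∀ u : L, ((univ.filter (fun y : L => y ^ 2 = u)).card : ℤ) = (χ u : ℤ) + 1 := by
    intro u
    have := quadraticChar_card_sqrts hL u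
    rw [Set.toFinset_setOf] at this
    exact_mod_cast this
  have h2 : (((univ.filter (fun xy : L × L => xy.1 ^ 2 + xy.2 ^ 2 = w)).card : ℤ))
      = (Fintype.card L : ℤ) + ∑ x : L, (χ (w - x ^ 2) : ℤ) := by
    rw [h0]
    push_cast
    rw [Finset.sum_congr rfl (fun x _ => h1 (w - x ^ 2))]
    rw [Finset.sum_add_distrib]
    simp [add_comm]
  rw [h2]
  congr 1
  -- ∑ x, χ (w - x^2) = χ(-1) * ...
  rw [sum_sq_expand hL (fun u => (χ (w - u) : ℤ))]
  have hsplit : ∑ u : L, ((χ u : ℤ) + 1) * (χ (w - u) : ℤ)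
      = (∑ u : L, (χ u : ℤ) * (χ (w - u) : ℤ)) + ∑ u : L, (χ (w - u) : ℤ) := by
    rw [← Finset.sum_add_distrib]
    exact Finset.sum_congr rfl fun u _ => by ring
  have hzero : ∑ u : L, (χ (w - u) : ℤ) = 0 := by
    have := Fintype.sum_equiv (Equiv.subLeft w) (fun u : L => (χ (w - u) : ℤ))
      (fun v : L => (χ v : ℤ)) (fun u => rfl)
    rw [this]
    exact_mod_cast quadraticChar_sum_zero hL
  rw [hsplit, hzero, add_zero]
  by_cases hw : w = 0
  · subst hw
    rw [if_pos rfl]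
    have : ∀ u : L, (χ u : ℤ) * (χ (0 - u) : ℤ) = (χ (-1) : ℤ) * (if u = 0 then 0 else 1) := by
      intro u
      by_cases hu : u = 0
      · simp [hu, hχ]
      · rw [if_neg hu, zero_sub, show -u = -1 * u by ring, map_mul]
        have hd := quadraticChar_dichotomy (F := L) hu
        rcases hd with h | h <;> rw [h] <;> ring
    rw [Finset.sum_congr rfl (fun u _ => this u), ← Finset.mul_sum]
    congr 1
    have hones : ∀ i : L, (if i = 0 then (0:ℤ) else 1) = 1 - (if i = 0 then 1 else 0) := by
      intro i; split <;> ring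
    rw [Finset.sum_congr rfl (fun i _ => hones i), Finset.sum_sub_distrib,
      Finset.sum_ite_eq' univ (0:L) (fun _ => (1:ℤ)), if_pos (Finset.mem_univ _)]
    simp [Finset.card_univ]
  · rw [if_neg hw]
    -- reindex u = w * t
    have hre := Fintype.sum_equiv (Equiv.mulLeft₀ w hw)
      (fun t : L => (χ t : ℤ) * (χ (1 - t) : ℤ) )
      (fun u : L => (χ u : ℤ) * (χ (w - u) : ℤ)) (fun t => by
        show (χ t : ℤ) * (χ (1 - t) : ℤ) = (χ (w * t) : ℤ) * (χ (w - w * t) : ℤ)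
        rw [show w - w * t = w * (1 - t) by ring, map_mul, map_mul]
        have hd := quadraticChar_dichotomy (F := L) hw
        push_cast
        rcases hd with h | h <;> rw [h] <;> ring)
    rw [← hre]
    have hj : ∑ t : L, (χ t : ℤ) * (χ (1 - t) : ℤ) = jacobiSum χ χ := rfl
    rw [hj, hχ, show jacobiSum (quadraticChar L) (quadraticChar L)
        = jacobiSum (quadraticChar L) (quadraticChar L)⁻¹ by
      rw [(quadraticChar_isQuadratic L).inv], jacobiSum_nontrivial_inv (quadraticChar_ne_one hL)]
    push_cast
    ring

lemma parity_nat (p : ℕ) (hp : Odd p) (s : ℕ) :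
    (p ^ s / 2) % 2 = ((p - 1) / 2 * s) % 2 := by
  induction s with
  | zero => simp
  | succ n ih =>
    obtain ⟨m, hm⟩ : Odd (p ^ n) := hp.pow
    obtain ⟨k, hk⟩ := hp
    have hpn : p ^ (n + 1) = 2 * (2 * k * m + k + m) + 1 := by
      rw [pow_succ, hm, hk]; ring
    have e1 : p ^ (n + 1) / 2 = 2 * k * m + k + m := by omega
    have e2 : p ^ n / 2 = m := by omega
    have e3 : (p - 1) / 2 = k := by omega
    rw [e2, e3] at ih
    rw [e1, e3, Nat.mul_succ, show 2 * k * m = 2 * (k * m) from by ring]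
    omega

lemma parity_pow (p : ℕ) (hp : Odd p) (s : ℕ) :
    (-1 : ℤ) ^ (p ^ s / 2) = (-1 : ℤ) ^ ((p - 1) / 2 * s) := by
  rw [neg_one_pow_eq_pow_mod_two, parity_nat p hp s, ← neg_one_pow_eq_pow_mod_two]

lemma ker_trace_card (F1 K : Type) [Field F1] [Field K] [Fintype F1] [Fintype K]
    [DecidableEq K] [DecidableEq F1] [Algebra F1 K] :
    (univ.filter (fun w : K => Algebra.trace F1 K w = 0)).card * Fintype.card F1
      = Fintype.card K := by
  classical
  have : Module.Finite F1 K := Module.Finite.of_finite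
  have hsurj : Function.Surjective (Algebra.trace F1 K) := Algebra.trace_surjective F1 K
  set f := (Algebra.trace F1 K : K →ₗ[F1] F1) with hf
  have h1 : (univ.filter (fun w : K => Algebra.trace F1 K w = 0)).card
      = Nat.card (LinearMap.ker f) := by
    rw [Nat.card_eq_fintype_card, Fintype.card_subtype]
    congr 1
    ext w
    simp [LinearMap.mem_ker, hf]
  have h2 : Nat.card K = Nat.card (K ⧸ (LinearMap.ker f).toAddSubgroup) *
      Nat.card (LinearMap.ker f).toAddSubgroup :=
    AddSubgroup.card_eq_card_quotient_mul_card_addSubgroup _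
  have h3 : Nat.card (K ⧸ (LinearMap.ker f).toAddSubgroup) = Nat.card F1 := by
    have e1 : (K ⧸ LinearMap.ker f) ≃ₗ[F1] LinearMap.range f := f.quotKerEquivRange
    have e2 : LinearMap.range f = ⊤ := LinearMap.range_eq_top.mpr hsurj
    have h : Nat.card (K ⧸ LinearMap.ker f) = Nat.card F1 := by
      rw [Nat.card_congr e1.toEquiv, e2]
      exact Nat.card_congr (Submodule.topEquiv).toEquiv
    exact h
  rw [h1, ← Nat.card_eq_fintype_card (α := F1), ← Nat.card_eq_fintype_card (α := K), h2, h3]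
  have : Nat.card (LinearMap.ker f) = Nat.card (LinearMap.ker f).toAddSubgroup := rfl
  rw [this]; ring

/-- when `a = b = 0`, the number of `(x,y) ∈ F_{p^s}²` with
`Tr_{s1}(x²+y²)=0` and `Tr_{s2}(ax+by)+c=0` equals `p^{2s-s1} + p^{-s1}(p^{s1}-1)G²`
if `c = 0`, and `0` if `c ≠ 0`, where `G² = (-1)^(((p-1)/2)s) p^s`.  (First case
stated multiplied through by `p^{s1}`.) -/
theorem stmt6 (p s s1 s2 : ℕ) (hp : p.Prime) (hodd : Odd p) (hs : 0 < s)
    (hs2 : 0 < s2) (hdvd1 : s1 ∣ s) (hdvd2 : s2 ∣ s1)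
    (F1 F2 K : Type) [Field F1] [Field F2] [Field K]
    [Fintype F1] [Fintype F2] [Fintype K]
    [DecidableEq F1] [DecidableEq F2] [DecidableEq K]
    [Algebra F1 K] [Algebra F2 K]
    (hcard1 : Fintype.card F1 = p ^ s1) (hcard2 : Fintype.card F2 = p ^ s2)
    (hcard : Fintype.card K = p ^ s)
    (a b : K) (ha : a = 0) (hb : b = 0) (c : F2) :
    let G2 : ℤ := (-1) ^ (((p - 1) / 2) * s) * p ^ s
    let N : ℕ := (Finset.univ.filter (fun xy : K × K =>
      Algebra.trace F1 K (xy.1 ^ 2 + xy.2 ^ 2) = 0 ∧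
      Algebra.trace F2 K (a * xy.1 + b * xy.2) + c = 0)).card
    (c = 0 → (N : ℤ) * p ^ s1 = p ^ (2 * s) + (p ^ s1 - 1) * G2) ∧
    (c ≠ 0 → N = 0) := by
  intro G2 N
  -- ringChar K = p
  have hK2 : ringChar K ≠ 2 := by
    haveI : CharP K (ringChar K) := ringChar.charP K
    have hq : (ringChar K).Prime := CharP.char_is_prime K (ringChar K)
    have hdvd0 : ringChar K ∣ p ^ s := by
      rw [← hcard]
      exact ringChar.dvd (FiniteField.cast_card_eq_zero K)
    have hdvd : ringChar K ∣ p := hq.dvd_of_dvd_pow hdvd0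
    have : ringChar K = p := (Nat.prime_dvd_prime_iff_eq hq hp).mp hdvd
    rw [this]
    rintro rfl
    exact (Nat.not_odd_iff_even.mpr even_two) hodd
  constructor
  · -- c = 0
    intro hc
    subst hc ha hb
    have hNP : N = (univ.filter (fun xy : K × K =>
        Algebra.trace F1 K (xy.1 ^ 2 + xy.2 ^ 2) = 0)).card := by
      apply congrArg Finset.card
      ext xy
      simp
    set T := univ.filter (fun w : K => Algebra.trace F1 K w = 0) with hT
    have h0T : (0 : K) ∈ T := by simp [hT]
    have hfib : N = ∑ w ∈ T, (univ.filter
        (fun xy : K × K => xy.1 ^ 2 + xy.2 ^ 2 = w)).card := by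
      rw [hNP]
      rw [Finset.card_eq_sum_card_fiberwise
        (f := fun xy : K × K => xy.1 ^ 2 + xy.2 ^ 2) (t := T)
        (fun xy hxy => by simpa [hT] using (Finset.mem_filter.mp hxy).2)]
      refine Finset.sum_congr rfl fun w hw => ?_
      apply congrArg Finset.card
      ext xy
      simp only [Finset.mem_filter, Finset.mem_univ, true_and]
      constructor
      · rintro ⟨_, h⟩; exact h
      · intro h
        refine ⟨?_, h⟩
        rw [h]
        simpa [hT] using hw
    set ε : ℤ := (quadraticChar K (-1) : ℤ) with hε
    set q : ℤ := (Fintype.card K : ℤ) with hq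
    have hNint : (N : ℤ) = (T.card : ℤ) * q + ε * (q - T.card) := by
      rw [hfib]
      push_cast
      rw [Finset.sum_congr rfl (fun w _ => count_sq_add_sq hK2 w)]
      have : ∀ w : K, (q + ε * (if w = 0 then q - 1 else -1))
          = (q - ε) + ε * (if w = 0 then q else 0) := by
        intro w; split <;> ring
      rw [Finset.sum_congr rfl (fun w _ => this w), Finset.sum_add_distrib,
        Finset.sum_const, ← Finset.mul_sum, Finset.sum_ite_eq' T (0 : K) (fun _ => q),
        if_pos h0T]
      push_cast
      ring
    have hker : (T.card : ℤ) * (p : ℤ) ^ s1 = (p : ℤ) ^ s := by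
      have := ker_trace_card F1 K
      rw [hcard1, hcard] at this
      exact_mod_cast this
    have hqv : q = (p : ℤ) ^ s := by rw [hq, hcard]; push_cast; ring
    have hεv : ε = (-1 : ℤ) ^ ((p - 1) / 2 * s) := by
      rw [hε, quadraticChar_neg_one hK2, hcard, ZMod.χ₄_eq_neg_one_pow, parity_pow p hodd]
      exact Nat.odd_iff.mp hodd.pow
    rw [hNint, hqv, hεv]
    show _ = (p:ℤ) ^ (2*s) + ((p:ℤ)^s1 - 1) * G2
    show _ = (p:ℤ) ^ (2*s) + ((p:ℤ)^s1 - 1) * ((-1) ^ (((p - 1) / 2) * s) * (p:ℤ) ^ s)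
    rw [two_mul, pow_add]
    linear_combination ((p:ℤ)^s - (-1 : ℤ) ^ ((p - 1) / 2 * s)) * hker
  · -- c ≠ 0
    intro hc
    have : (univ.filter (fun xy : K × K =>
        Algebra.trace F1 K (xy.1 ^ 2 + xy.2 ^ 2) = 0 ∧
        Algebra.trace F2 K (a * xy.1 + b * xy.2) + c = 0)) = ∅ := by
      rw [Finset.filter_eq_empty_iff]
      intro xy _
      simp [ha, hb, hc]
    show (univ.filter _).card = 0
    rw [this, Finset.card_empty]
end

section
/- Let p be an odd prime, s a positive integer, and s1, s2 divisors of s with s2 | s1. In the code C_D defined over F_{p^{s2}} by codewords (Tr_{F_{p^s}/F_{p^{s2}}}(ax+by) + c)_{(x,y)∈D} with D = {(x,y) : Tr_{F_{p^s}/F_{p^{s1}}}(x^2+y^2)=0}, the codeword with a = b = 0 and c ≠ 0 has Hamming weight equal to the full length n = (p^{2s}+(p^{s1}-1)G^2)/p^{s1}, and for (a,b) ≠ (0,0) with Tr_{F_{p^s}/F_{p^{s1}}}(a^2+b^2) = 0 and c = 0 the codeword has weight p^{2s-s1-s2}(p^{s2}-1). -/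
open scoped BigOperators

open Finset AddChar Polynomial in
private lemma aux_three_pow_mod (s : ℕ) : (3:ℕ)^s % 4 = if Even s then 1 else 3 := by
  induction s with
  | zero => simp
  | succ n ih =>
    rw [pow_succ, Nat.mul_mod, ih]
    rcases Nat.even_or_odd n with h | h
    · simp [h, Nat.even_add_one]
    · simp [Nat.not_even_iff_odd.2 h, Nat.even_add_one, Nat.not_even_iff_odd]

private lemma aux_chi4 (p s : ℕ) (hodd : Odd p) :
    ZMod.χ₄ ((p ^ s : ℕ) : ZMod 4) = (-1 : ℤ) ^ (((p - 1) / 2) * s) := by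
  have h2 : p % 2 = 1 := Nat.odd_iff.mp hodd
  have hps2 : p ^ s % 2 = 1 := by rw [Nat.pow_mod, h2, one_pow]; rfl
  have h4 : p % 4 = 1 ∨ p % 4 = 3 := by omega
  rw [ZMod.χ₄_nat_eq_if_mod_four, if_neg (by omega)]
  rcases h4 with h | h
  · have hpow : p ^ s % 4 = 1 := by rw [Nat.pow_mod, h, one_pow]; rfl
    have he : Even (((p - 1) / 2) * s) :=
      Even.mul_right (Nat.even_iff.mpr (by omega)) s
    rw [hpow, if_pos rfl, he.neg_one_pow]
  · have hpow : p ^ s % 4 = if Even s then 1 else 3 := by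
      rw [Nat.pow_mod, h, ← aux_three_pow_mod s, Nat.pow_mod]
    have hoddq : (p - 1) / 2 % 2 = 1 := by omega
    rcases Nat.even_or_odd s with hs | hs
    · rw [hpow, if_pos hs, if_pos rfl, ((hs.mul_left _)).neg_one_pow]
    · have hns : ¬ Even s := Nat.not_even_iff_odd.2 hs
      have : Odd (((p-1)/2) * s) := (Nat.odd_iff.mpr hoddq).mul hs
      rw [hpow, if_neg hns, if_neg (by omega), this.neg_one_pow]

private lemma aux_charP (F : Type*) [Field F] [Fintype F] (p n : ℕ) (hp : p.Prime) (hn : 0 < n)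
    (h : Fintype.card F = p ^ n) : CharP F p := by
  set q := ringChar F with hq
  haveI : CharP F q := ringChar.charP F
  have hqp : q.Prime := CharP.char_is_prime F q
  obtain ⟨m, hm⟩ := FiniteField.card F q
  have hdq : p ∣ q ^ (m : ℕ) := by
    rw [← hm.2, h]; exact dvd_pow_self p hn.ne'
  have : p = q := (Nat.prime_dvd_prime_iff_eq hp hqp).mp (hp.dvd_of_dvd_pow hdq)
  rwa [this]

private lemma aux_pow_dvd {K : Type*} [Monoid K] (p a b : ℕ) (h : a ∣ b) (z : K)
    (hz : z ^ p ^ a = z) : z ^ p ^ b = z := by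
  rcases h with ⟨k, rfl⟩
  induction k with
  | zero => simp
  | succ k ih =>
    rw [Nat.mul_succ, pow_add, pow_mul, ih, hz]

open Finset Polynomial in
private lemma aux_range (F K : Type*) [Field F] [Field K] [Fintype F] [Fintype K] [Algebra F K]
    (p n : ℕ) (hp : p.Prime) (hn : 0 < n) (h : Fintype.card F = p ^ n)
    (z : K) (hz : z ^ p ^ n = z) : ∃ γ : F, algebraMap F K γ = z := by
  classical
  have h2 : 2 ≤ p ^ n := by
    calc 2 ≤ p := hp.two_le
    _ ≤ p ^ n := Nat.le_self_pow hn.ne' p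
  set f : K[X] := X ^ (p ^ n) - X with hf
  have hdeg : f.natDegree = p ^ n := by
    rw [hf]
    rw [Polynomial.natDegree_sub_eq_left_of_natDegree_lt]
    · exact natDegree_X_pow _
    · rw [natDegree_X_pow, natDegree_X]; omega
  have hfne : f ≠ 0 := by
    intro h0
    rw [h0, natDegree_zero] at hdeg; omega
  set S : Finset K := univ.filter (fun z : K => z ^ p ^ n = z) with hS
  set R : Finset K := (univ : Finset F).image (algebraMap F K) with hR
  have hRS : R ⊆ S := by
    intro x hx
    rw [hR, mem_image] at hx
    obtain ⟨γ, -, rfl⟩ := hx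
    rw [hS, mem_filter]
    refine ⟨mem_univ _, ?_⟩
    rw [← map_pow, ← h, FiniteField.pow_card]
  have hScard : S.card ≤ p ^ n := by
    have hsub : S ⊆ f.roots.toFinset := by
      intro x hx
      rw [hS, mem_filter] at hx
      rw [Multiset.mem_toFinset, mem_roots hfne]
      simp [hf, IsRoot, sub_eq_zero, hx.2]
    calc S.card ≤ f.roots.toFinset.card := card_le_card hsub
    _ ≤ Multiset.card f.roots := Multiset.toFinset_card_le _
    _ ≤ f.natDegree := f.card_roots'
    _ = p ^ n := hdeg
  have hRcard : R.card = p ^ n := by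
    rw [hR, card_image_of_injective _ (algebraMap F K).injective, card_univ, h]
  have : R = S := eq_of_subset_of_card_le hRS (by omega)
  have hzS : z ∈ S := by rw [hS, mem_filter]; exact ⟨mem_univ _, hz⟩
  rw [← this, hR, mem_image] at hzS
  obtain ⟨γ, -, hγ⟩ := hzS
  exact ⟨γ, hγ⟩

open Finset AddChar in
/-- in the code `C_D` (with `s2 ∣ s1 ∣ s`), the codeword with `a = b = 0`
and `c ≠ 0` has Hamming weight equal to the full length
`n = (p^{2s}+(p^{s1}-1)G²)/p^{s1}`, and for `(a,b) ≠ (0,0)` with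
`Tr_{K/F1}(a²+b²) = 0` and `c = 0` the codeword has weight `p^{2s-s1-s2}(p^{s2}-1)`. -/
theorem stmt9 (p s s1 s2 : ℕ) (hp : p.Prime) (hodd : Odd p) (hs : 0 < s)
    (hs2 : 0 < s2) (hdvd1 : s1 ∣ s) (hdvd2 : s2 ∣ s1)
    (F1 F2 K : Type) [Field F1] [Field F2] [Field K]
    [Fintype F1] [Fintype F2] [Fintype K]
    [DecidableEq F1] [DecidableEq F2] [DecidableEq K]
    [Algebra F1 K] [Algebra F2 K]
    (hcard1 : Fintype.card F1 = p ^ s1) (hcard2 : Fintype.card F2 = p ^ s2)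
    (hcard : Fintype.card K = p ^ s) :
    let D : Finset (K × K) := Finset.univ.filter
      (fun xy : K × K => Algebra.trace F1 K (xy.1 ^ 2 + xy.2 ^ 2) = 0)
    let wt : K → K → F2 → ℕ := fun a b c =>
      (D.filter (fun xy => Algebra.trace F2 K (a * xy.1 + b * xy.2) + c ≠ 0)).card
    (∀ c : F2, c ≠ 0 → wt 0 0 c = D.card) ∧
    ((D.card : ℤ) * p ^ s1
        = p ^ (2 * s) + (p ^ s1 - 1) * ((-1) ^ (((p - 1) / 2) * s) * p ^ s)) ∧
    (∀ a b : K, ¬(a = 0 ∧ b = 0) → Algebra.trace F1 K (a ^ 2 + b ^ 2) = 0 →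
      wt a b 0 = p ^ (2 * s - s1 - s2) * (p ^ s2 - 1)) := by
  intro D wt
  have hDdef : D = Finset.univ.filter
      (fun xy : K × K => Algebra.trace F1 K (xy.1 ^ 2 + xy.2 ^ 2) = 0) := rfl
  -- Part 1 is easy
  have part1 : ∀ c : F2, c ≠ 0 → wt 0 0 c = D.card := by
    intro c hc
    show (D.filter _).card = D.card
    rw [Finset.filter_true_of_mem]
    intro xy _
    simpa using hc
  refine ⟨part1, ?_⟩
  -- basic numerics
  haveI : Fact p.Prime := ⟨hp⟩
  have hs1 : 0 < s1 := Nat.pos_of_dvd_of_pos hdvd1 hs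
  have hpne2 : p ≠ 2 := by rcases hodd with ⟨k, hk⟩; omega
  have hs1les : s1 ≤ s := Nat.le_of_dvd hs hdvd1
  have hs2les1 : s2 ≤ s1 := Nat.le_of_dvd hs1 hdvd2
  -- characteristic and `ZMod p` structures
  haveI hchK : CharP K p := aux_charP K p s hp hs hcard
  haveI hchF1 : CharP F1 p := aux_charP F1 p s1 hp hs1 hcard1
  haveI hchF2 : CharP F2 p := aux_charP F2 p s2 hp hs2 hcard2
  letI : Algebra (ZMod p) K := ZMod.algebra _ _
  letI : Algebra (ZMod p) F1 := ZMod.algebra _ _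
  letI : Algebra (ZMod p) F2 := ZMod.algebra _ _
  haveI t1 : IsScalarTower (ZMod p) F1 K := IsScalarTower.of_algebraMap_eq'
    (Subsingleton.elim _ _)
  haveI t2 : IsScalarTower (ZMod p) F2 K := IsScalarTower.of_algebraMap_eq'
    (Subsingleton.elim _ _)
  have htrsurjK : Function.Surjective (Algebra.trace (ZMod p) K) :=
    Algebra.trace_surjective (ZMod p) K
  have htrsurjF1 : Function.Surjective (Algebra.trace (ZMod p) F1) :=
    Algebra.trace_surjective (ZMod p) F1
  have htrsurjF2 : Function.Surjective (Algebra.trace (ZMod p) F2) :=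
    Algebra.trace_surjective (ZMod p) F2
  -- additive characters
  set ψ₀ : AddChar (ZMod p) ℂ := FiniteField.primitiveChar_to_Complex (ZMod p) with hψ₀def
  have hψ₀ : ψ₀.IsPrimitive := FiniteField.primitiveChar_to_Complex_isPrimitive (ZMod p)
  have hψ₀ne : ψ₀ ≠ 1 := by
    have := hψ₀ (a := 1) one_ne_zero
    rwa [mulShift_one] at this
  set E : AddChar K ℂ := ψ₀.compAddMonoidHom (Algebra.trace (ZMod p) K).toAddMonoidHom
    with hEdef
  set e1 : AddChar F1 ℂ := ψ₀.compAddMonoidHom (Algebra.trace (ZMod p) F1).toAddMonoidHom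
    with he1def
  set e2 : AddChar F2 ℂ := ψ₀.compAddMonoidHom (Algebra.trace (ZMod p) F2).toAddMonoidHom
    with he2def
  have hEapp : ∀ w : K, E w = ψ₀ (Algebra.trace (ZMod p) K w) := fun w => rfl
  have he1app : ∀ w : F1, e1 w = ψ₀ (Algebra.trace (ZMod p) F1 w) := fun w => rfl
  have he2app : ∀ w : F2, e2 w = ψ₀ (Algebra.trace (ZMod p) F2 w) := fun w => rfl
  have hEne : E ≠ 1 := by
    obtain ⟨c, hc⟩ := ne_one_iff.mp hψ₀ne
    obtain ⟨x, hx⟩ := htrsurjK c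
    exact ne_one_iff.mpr ⟨x, by rw [hEapp, hx]; exact hc⟩
  have hEprim : E.IsPrimitive := IsPrimitive.of_ne_one hEne
  have he1ne : e1 ≠ 1 := by
    obtain ⟨c, hc⟩ := ne_one_iff.mp hψ₀ne
    obtain ⟨x, hx⟩ := htrsurjF1 c
    exact ne_one_iff.mpr ⟨x, by rw [he1app, hx]; exact hc⟩
  have he1prim : e1.IsPrimitive := IsPrimitive.of_ne_one he1ne
  have he2ne : e2 ≠ 1 := by
    obtain ⟨c, hc⟩ := ne_one_iff.mp hψ₀ne
    obtain ⟨x, hx⟩ := htrsurjF2 c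
    exact ne_one_iff.mpr ⟨x, by rw [he2app, hx]; exact hc⟩
  have he2prim : e2.IsPrimitive := IsPrimitive.of_ne_one he2ne
  have key1 : ∀ (α : F1) (w : K),
      E (algebraMap F1 K α * w) = e1 (α * Algebra.trace F1 K w) := by
    intro α w
    rw [hEapp, he1app]
    congr 1
    rw [← Algebra.trace_trace (S := F1) (algebraMap F1 K α * w)]
    congr 1
    rw [← Algebra.smul_def, map_smul, smul_eq_mul]
  have key2 : ∀ (β : F2) (w : K),
      E (algebraMap F2 K β * w) = e2 (β * Algebra.trace F2 K w) := by
    intro β w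
    rw [hEapp, he2app]
    congr 1
    rw [← Algebra.trace_trace (S := F2) (algebraMap F2 K β * w)]
    congr 1
    rw [← Algebra.smul_def, map_smul, smul_eq_mul]
  have ind1 : ∀ w : K, ∑ α : F1, E (algebraMap F1 K α * w)
      = if Algebra.trace F1 K w = 0 then ((p : ℂ))^s1 else 0 := by
    intro w
    have : ∑ α : F1, E (algebraMap F1 K α * w)
        = ∑ α : F1, e1 (α * Algebra.trace F1 K w) :=
      Finset.sum_congr rfl fun α _ => key1 α w
    rw [this, sum_mulShift _ he1prim, hcard1]
    push_cast
    rfl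
  have ind2 : ∀ w : K, ∑ β : F2, E (algebraMap F2 K β * w)
      = if Algebra.trace F2 K w = 0 then ((p : ℂ))^s2 else 0 := by
    intro w
    have : ∑ β : F2, E (algebraMap F2 K β * w)
        = ∑ β : F2, e2 (β * Algebra.trace F2 K w) :=
      Finset.sum_congr rfl fun β _ => key2 β w
    rw [this, sum_mulShift _ he2prim, hcard2]
    push_cast
    rfl
  -- the quadratic character and Gauss sum
  have hchar2 : ringChar K ≠ 2 := by rw [ringChar.eq K p]; exact hpne2
  set χ : MulChar K ℂ := (quadraticChar K).ringHomComp (Int.castRingHom ℂ) with hχdef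
  have hχapp : ∀ x : K, χ x = ((quadraticChar K x : ℤ) : ℂ) := fun x => rfl
  have hχ1 : χ ≠ 1 :=
    (MulChar.ringHomComp_ne_one_iff Int.cast_injective).mpr (quadraticChar_ne_one hchar2)
  have hχq : χ.IsQuadratic := (quadraticChar_isQuadratic K).comp _
  set G : ℂ := gaussSum χ E with hGdef
  set ε : ℤ := quadraticChar K (-1) with hεdef
  have hG2 : G ^ 2 = (ε : ℂ) * (p : ℂ) ^ s := by
    rw [hGdef, gaussSum_sq hχ1 hχq hEprim, hcard, hχapp]
    push_cast
    ring
  have hεval : ε = (-1 : ℤ) ^ (((p - 1) / 2) * s) := by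
    rw [hεdef, quadraticChar_neg_one hchar2, hcard]
    exact aux_chi4 p s hodd
  have quadsum : ∀ ψ : AddChar K ℂ, ψ ≠ 1 → ∑ x : K, ψ (x ^ 2) = gaussSum χ ψ := by
    intro ψ hψ
    have h1 : ∑ x : K, ψ (x ^ 2)
        = ∑ a : K, ∑ x ∈ univ.filter (fun x => x ^ 2 = a), ψ (x ^ 2) :=
      (Finset.sum_fiberwise univ (fun x => x ^ 2) (fun x => ψ (x ^ 2))).symm
    have h2 : ∀ a : K, ∑ x ∈ univ.filter (fun x => x ^ 2 = a), ψ (x ^ 2)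
        = (((quadraticChar K a : ℤ) : ℂ) + 1) * ψ a := by
      intro a
      have hc : ((univ.filter (fun x : K => x ^ 2 = a)).card : ℤ)
          = quadraticChar K a + 1 := by
        rw [← quadraticChar_card_sqrts hchar2 a]
        congr 1
        rw [Set.toFinset_setOf]
      calc ∑ x ∈ univ.filter (fun x => x ^ 2 = a), ψ (x ^ 2)
          = ∑ x ∈ univ.filter (fun x : K => x ^ 2 = a), ψ a := by
            refine Finset.sum_congr rfl fun x hx => ?_
            rw [(mem_filter.mp hx).2]
        _ = ((univ.filter (fun x : K => x ^ 2 = a)).card : ℂ) * ψ a := by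
            rw [Finset.sum_const, nsmul_eq_mul]
        _ = (((quadraticChar K a : ℤ) : ℂ) + 1) * ψ a := by
            congr 1
            exact_mod_cast congrArg (fun z : ℤ => (z : ℂ)) hc
    rw [h1]
    simp_rw [h2, add_mul, one_mul, Finset.sum_add_distrib]
    rw [sum_eq_zero_of_ne_one hψ, add_zero, gaussSum]
    exact Finset.sum_congr rfl fun a _ => rfl
  have sumE_sq : ∀ t : K, t ≠ 0 →
      ∑ x : K, E (t * x ^ 2) = ((quadraticChar K t : ℤ) : ℂ) * G := by
    intro t ht
    have hne : E.mulShift t ≠ 1 := hEprim ht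
    have h1 : ∑ x : K, E (t * x ^ 2) = gaussSum χ (E.mulShift t) := by
      rw [← quadsum _ hne]
      exact Finset.sum_congr rfl fun x _ => by rw [mulShift_apply]
    have h2 := gaussSum_mulShift χ E ht.isUnit.unit
    rw [IsUnit.unit_spec] at h2
    have hsq : ((quadraticChar K t : ℤ) : ℂ) * ((quadraticChar K t : ℤ) : ℂ) = 1 := by
      have := quadraticChar_sq_one ht
      rw [pow_two] at this
      exact_mod_cast congrArg (fun z : ℤ => (z : ℂ)) this
    rw [h1, hGdef, ← h2, hχapp, ← mul_assoc, hsq, one_mul]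
  have h2ne : (2 : K) ≠ 0 := by
    intro h
    have h' : ((2 : ℕ) : K) = 0 := by exact_mod_cast h
    have := (CharP.cast_eq_zero_iff K p 2).mp h'
    have := Nat.le_of_dvd two_pos this
    have := hp.two_le
    omega
  have h4ne : (4 : K) ≠ 0 := by
    have : (4 : K) = 2 * 2 := by norm_num
    rw [this]; exact mul_ne_zero h2ne h2ne
  have CS : ∀ t u : K, t ≠ 0 →
      ∑ x : K, E (t * x ^ 2 + u * x) = E (-(u ^ 2) / (4 * t)) * ∑ x : K, E (t * x ^ 2) := by
    intro t u ht
    have key : ∀ x : K, t * x ^ 2 + u * x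
        = (-(u ^ 2) / (4 * t)) + t * (x + u / (2 * t)) ^ 2 := by
      intro x
      field_simp
      ring
    calc ∑ x : K, E (t * x ^ 2 + u * x)
        = ∑ x : K, E (-(u ^ 2) / (4 * t)) * E (t * (x + u / (2 * t)) ^ 2) := by
          refine Finset.sum_congr rfl fun x _ => ?_
          rw [key x, map_add_eq_mul]
      _ = E (-(u ^ 2) / (4 * t)) * ∑ x : K, E (t * (x + u / (2 * t)) ^ 2) := by
          rw [Finset.mul_sum]
      _ = E (-(u ^ 2) / (4 * t)) * ∑ x : K, E (t * x ^ 2) := by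
          congr 1
          exact Fintype.sum_equiv (Equiv.addRight (u / (2 * t))) _ _ fun x => rfl
  -- cast facts
  have hqC : ((Fintype.card K : ℕ) : ℂ) = (p : ℂ) ^ s := by rw [hcard]; push_cast; rfl
  have hp1le : (1 : ℕ) ≤ p ^ s1 := Nat.one_le_pow _ _ hp.pos
  have hp2le : (1 : ℕ) ≤ p ^ s2 := Nat.one_le_pow _ _ hp.pos
  -- the main count for part 2
  have hcast1 : ((p ^ s1 - 1 : ℕ) : ℂ) = (p : ℂ) ^ s1 - 1 := by
    rw [Nat.cast_sub hp1le]; push_cast; ring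
  have hcast2 : ((p ^ s2 - 1 : ℕ) : ℂ) = (p : ℂ) ^ s2 - 1 := by
    rw [Nat.cast_sub hp2le]; push_cast; ring
  have hterma : ∀ α : F1, α ≠ 0 →
      (∑ x : K, E (algebraMap F1 K α * x ^ 2)) * (∑ y : K, E (algebraMap F1 K α * y ^ 2))
        = (ε : ℂ) * (p : ℂ) ^ s := by
    intro α hα
    have hα' : algebraMap F1 K α ≠ 0 := fun h =>
      hα ((algebraMap F1 K).injective (by rw [h, map_zero]))
    have hsq : ((quadraticChar K (algebraMap F1 K α) : ℤ) : ℂ)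
        * ((quadraticChar K (algebraMap F1 K α) : ℤ) : ℂ) = 1 := by
      have := quadraticChar_sq_one hα'
      rw [pow_two] at this
      exact_mod_cast congrArg (fun z : ℤ => (z : ℂ)) this
    rw [sumE_sq _ hα', ← hG2]
    calc ((quadraticChar K (algebraMap F1 K α) : ℤ) : ℂ) * G
          * (((quadraticChar K (algebraMap F1 K α) : ℤ) : ℂ) * G)
        = (((quadraticChar K (algebraMap F1 K α) : ℤ) : ℂ)
          * ((quadraticChar K (algebraMap F1 K α) : ℤ) : ℂ)) * G ^ 2 := by ring
      _ = G ^ 2 := by rw [hsq, one_mul]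
  have hD : ((D.card : ℂ)) * (p : ℂ) ^ s1
      = (p : ℂ) ^ (2 * s) + ((p : ℂ) ^ s1 - 1) * ((ε : ℂ) * (p : ℂ) ^ s) := by
    have step1 : ((D.card : ℂ)) * (p : ℂ) ^ s1
        = ∑ xy : K × K, (if Algebra.trace F1 K (xy.1 ^ 2 + xy.2 ^ 2) = 0
            then ((p : ℂ)) ^ s1 else 0) := by
      rw [Finset.sum_ite, Finset.sum_const_zero, add_zero, Finset.sum_const,
        nsmul_eq_mul, hDdef]
    have step2 : ∀ xy : K × K,
        (if Algebra.trace F1 K (xy.1 ^ 2 + xy.2 ^ 2) = 0 then ((p : ℂ)) ^ s1 else 0)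
        = ∑ α : F1, E (algebraMap F1 K α * xy.1 ^ 2) * E (algebraMap F1 K α * xy.2 ^ 2) := by
      intro xy
      rw [← ind1 (xy.1 ^ 2 + xy.2 ^ 2)]
      refine Finset.sum_congr rfl fun α _ => ?_
      rw [← map_add_eq_mul, mul_add]
    have step3 : ∑ xy : K × K, ∑ α : F1,
          E (algebraMap F1 K α * xy.1 ^ 2) * E (algebraMap F1 K α * xy.2 ^ 2)
        = ∑ α : F1, (∑ x : K, E (algebraMap F1 K α * x ^ 2))
            * (∑ y : K, E (algebraMap F1 K α * y ^ 2)) := by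
      rw [Finset.sum_comm]
      refine Finset.sum_congr rfl fun α _ => ?_
      rw [Finset.sum_mul_sum]
      exact Fintype.sum_prod_type _
    have hterm0 : (∑ x : K, E (algebraMap F1 K (0 : F1) * x ^ 2))
        * (∑ y : K, E (algebraMap F1 K (0 : F1) * y ^ 2)) = (p : ℂ) ^ (2 * s) := by
      have h1 : ∀ x : K, E (algebraMap F1 K (0 : F1) * x ^ 2) = 1 := by
        intro x; rw [map_zero, zero_mul, map_zero_eq_one]
      simp only [h1, Finset.sum_const, nsmul_eq_mul, mul_one, card_univ]
      rw [hqC, two_mul, pow_add]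
    rw [step1, Finset.sum_congr rfl fun xy _ => step2 xy, step3,
      ← Finset.add_sum_erase _ _ (mem_univ (0 : F1)), hterm0,
      Finset.sum_congr rfl (fun α hα => hterma α (Finset.ne_of_mem_erase hα)),
      Finset.sum_const, card_erase_of_mem (mem_univ _), card_univ, hcard1,
      nsmul_eq_mul, hcast1]
  have part2 : ((D.card : ℤ)) * (p : ℤ) ^ s1
      = (p : ℤ) ^ (2 * s) + ((p : ℤ) ^ s1 - 1) * ((-1) ^ (((p - 1) / 2) * s) * (p : ℤ) ^ s) := by
    have := hD
    rw [hεval] at this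
    exact_mod_cast this
  refine ⟨part2, ?_⟩
  -- part 3
  intro a b hab htr
  set M : ℕ := (D.filter (fun xy : K × K =>
      Algebra.trace F2 K (a * xy.1 + b * xy.2) = 0)).card with hMdef
  set f : F1 → F2 → ℂ := fun α β =>
    (∑ x : K, E (algebraMap F1 K α * x ^ 2 + algebraMap F2 K β * a * x)) *
    (∑ y : K, E (algebraMap F1 K α * y ^ 2 + algebraMap F2 K β * b * y)) with hfdef
  have hf00 : f 0 0 = (p : ℂ) ^ (2 * s) := by
    simp only [hfdef]
    have h1 : ∀ (c : K) (x : K),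
        E (algebraMap F1 K (0 : F1) * x ^ 2 + algebraMap F2 K (0 : F2) * c * x) = 1 := by
      intro c x
      simp only [map_zero, zero_mul, add_zero, map_zero_eq_one]
    simp only [h1, Finset.sum_const, nsmul_eq_mul, mul_one, card_univ]
    rw [hqC, two_mul, pow_add]
  have hf0β : ∀ β : F2, β ≠ 0 → f 0 β = 0 := by
    intro β hβ
    have hβ' : algebraMap F2 K β ≠ 0 := fun h =>
      hβ ((algebraMap F2 K).injective (by rw [h, map_zero]))
    have hzero : ∀ c : K, c ≠ 0 →
        ∑ x : K, E (algebraMap F1 K (0 : F1) * x ^ 2 + c * x) = 0 := by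
      intro c hc
      have h1 : ∀ x : K, E (algebraMap F1 K (0 : F1) * x ^ 2 + c * x) = E (x * c) := by
        intro x; rw [map_zero, zero_mul, zero_add, mul_comm]
      rw [Finset.sum_congr rfl fun x _ => h1 x, sum_mulShift _ hEprim, if_neg hc,
        Nat.cast_zero]
    simp only [hfdef]
    rcases not_and_or.mp hab with ha | hb
    · rw [hzero _ (mul_ne_zero hβ' ha), zero_mul]
    · rw [hzero _ (mul_ne_zero hβ' hb), mul_zero]
  have hfα0 : ∀ α : F1, α ≠ 0 → f α 0 = (ε : ℂ) * (p : ℂ) ^ s := by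
    intro α hα
    simp only [hfdef]
    have h1 : ∀ (c : K) (x : K),
        E (algebraMap F1 K α * x ^ 2 + algebraMap F2 K (0 : F2) * c * x)
          = E (algebraMap F1 K α * x ^ 2) := by
      intro c x; rw [map_zero, zero_mul, zero_mul, add_zero]
    rw [Finset.sum_congr rfl fun x _ => h1 a x, Finset.sum_congr rfl fun y _ => h1 b y]
    exact hterma α hα
  have hfαβ : ∀ (α : F1), α ≠ 0 → ∀ (β : F2), β ≠ 0 → f α β = (ε : ℂ) * (p : ℂ) ^ s := by
    intro α hα β hβ
    have hα' : algebraMap F1 K α ≠ 0 := fun h =>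
      hα ((algebraMap F1 K).injective (by rw [h, map_zero]))
    have hβ' : algebraMap F2 K β ≠ 0 := fun h =>
      hβ ((algebraMap F2 K).injective (by rw [h, map_zero]))
    have hBpow : (algebraMap F2 K β) ^ p ^ s2 = algebraMap F2 K β := by
      rw [← map_pow, ← hcard2, FiniteField.pow_card]
    obtain ⟨γ, hγ⟩ := aux_range F1 K p s1 hp hs1 hcard1 (algebraMap F2 K β)
      (aux_pow_dvd p s2 s1 hdvd2 _ hBpow)
    have hE1 : E (-(algebraMap F2 K β * a) ^ 2 / (4 * algebraMap F1 K α))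
        * E (-(algebraMap F2 K β * b) ^ 2 / (4 * algebraMap F1 K α)) = 1 := by
      rw [← map_add_eq_mul]
      have harg : -(algebraMap F2 K β * a) ^ 2 / (4 * algebraMap F1 K α)
          + -(algebraMap F2 K β * b) ^ 2 / (4 * algebraMap F1 K α)
          = algebraMap F1 K (-(γ ^ 2) / (4 * α)) * (a ^ 2 + b ^ 2) := by
        rw [map_div₀, map_neg, map_pow, hγ, map_mul, map_ofNat]
        ring
      rw [harg, key1, htr, mul_zero, map_zero_eq_one]
    have hsq : ((quadraticChar K (algebraMap F1 K α) : ℤ) : ℂ)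
        * ((quadraticChar K (algebraMap F1 K α) : ℤ) : ℂ) = 1 := by
      have := quadraticChar_sq_one hα'
      rw [pow_two] at this
      exact_mod_cast congrArg (fun z : ℤ => (z : ℂ)) this
    have habstract : ∀ (X Y c g : ℂ), X * Y = 1 → c * c = 1 →
        (X * (c * g)) * (Y * (c * g)) = g ^ 2 := by
      intro X Y c g hXY hc
      calc (X * (c * g)) * (Y * (c * g)) = (X * Y) * ((c * c) * g ^ 2) := by ring
        _ = g ^ 2 := by rw [hXY, hc, one_mul, one_mul]
    simp only [hfdef]
    rw [CS _ _ hα', CS _ _ hα', sumE_sq _ hα', habstract _ _ _ _ hE1 hsq, hG2]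
  have htotal : ∑ α : F1, ∑ β : F2, f α β
      = (p : ℂ) ^ (2 * s) + ((p : ℂ) ^ s1 - 1)
        * ((p : ℂ) ^ s2 * ((ε : ℂ) * (p : ℂ) ^ s)) := by
    rw [← Finset.add_sum_erase _ _ (mem_univ (0 : F1))]
    have h0 : ∑ β : F2, f 0 β = (p : ℂ) ^ (2 * s) := by
      rw [← Finset.add_sum_erase _ _ (mem_univ (0 : F2)), hf00,
        Finset.sum_eq_zero (fun β hβ => hf0β β (Finset.ne_of_mem_erase hβ)), add_zero]
    have hrest : ∀ α ∈ univ.erase (0 : F1), ∑ β : F2, f α β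
        = (p : ℂ) ^ s2 * ((ε : ℂ) * (p : ℂ) ^ s) := by
      intro α hαm
      have hα := Finset.ne_of_mem_erase hαm
      rw [← Finset.add_sum_erase _ _ (mem_univ (0 : F2)), hfα0 α hα,
        Finset.sum_congr rfl (fun β hβ => hfαβ α hα β (Finset.ne_of_mem_erase hβ)),
        Finset.sum_const, card_erase_of_mem (mem_univ _), card_univ, hcard2,
        nsmul_eq_mul, hcast2]
      ring
    rw [h0, Finset.sum_congr rfl hrest, Finset.sum_const,
      card_erase_of_mem (mem_univ _), card_univ, hcard1, nsmul_eq_mul, hcast1]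
  have hMsum : (M : ℂ) * ((p : ℂ) ^ s1 * (p : ℂ) ^ s2) = ∑ α : F1, ∑ β : F2, f α β := by
    have stepA : (M : ℂ) * ((p : ℂ) ^ s1 * (p : ℂ) ^ s2)
        = ∑ xy : K × K,
          (if Algebra.trace F1 K (xy.1 ^ 2 + xy.2 ^ 2) = 0 then ((p : ℂ)) ^ s1 else 0) *
          (if Algebra.trace F2 K (a * xy.1 + b * xy.2) = 0 then ((p : ℂ)) ^ s2 else 0) := by
      have hpt : ∀ xy : K × K,
          (if Algebra.trace F1 K (xy.1 ^ 2 + xy.2 ^ 2) = 0 then ((p : ℂ)) ^ s1 else 0) *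
          (if Algebra.trace F2 K (a * xy.1 + b * xy.2) = 0 then ((p : ℂ)) ^ s2 else 0)
          = if (Algebra.trace F1 K (xy.1 ^ 2 + xy.2 ^ 2) = 0
              ∧ Algebra.trace F2 K (a * xy.1 + b * xy.2) = 0)
            then ((p : ℂ)) ^ s1 * ((p : ℂ)) ^ s2 else 0 := by
        intro xy
        by_cases h1 : Algebra.trace F1 K (xy.1 ^ 2 + xy.2 ^ 2) = 0 <;>
          by_cases h2 : Algebra.trace F2 K (a * xy.1 + b * xy.2) = 0
        · rw [if_pos h1, if_pos h2, if_pos ⟨h1, h2⟩]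
        · rw [if_pos h1, if_neg h2, if_neg (fun h => h2 h.2), mul_zero]
        · rw [if_neg h1, if_pos h2, if_neg (fun h => h1 h.1), zero_mul]
        · rw [if_neg h1, if_neg h2, if_neg (fun h => h1 h.1), zero_mul]
      rw [Finset.sum_congr rfl fun xy _ => hpt xy, Finset.sum_ite, Finset.sum_const_zero,
        add_zero, Finset.sum_const, nsmul_eq_mul]
      congr 1
      rw [hMdef, hDdef, Finset.filter_filter]
    rw [stepA]
    have stepB : ∀ xy : K × K,
        (if Algebra.trace F1 K (xy.1 ^ 2 + xy.2 ^ 2) = 0 then ((p : ℂ)) ^ s1 else 0) *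
        (if Algebra.trace F2 K (a * xy.1 + b * xy.2) = 0 then ((p : ℂ)) ^ s2 else 0)
        = ∑ α : F1, ∑ β : F2,
            E (algebraMap F1 K α * xy.1 ^ 2 + algebraMap F2 K β * a * xy.1) *
            E (algebraMap F1 K α * xy.2 ^ 2 + algebraMap F2 K β * b * xy.2) := by
      intro xy
      rw [← ind1 (xy.1 ^ 2 + xy.2 ^ 2), ← ind2 (a * xy.1 + b * xy.2), Finset.sum_mul_sum]
      refine Finset.sum_congr rfl fun α _ => Finset.sum_congr rfl fun β _ => ?_
      rw [← map_add_eq_mul, ← map_add_eq_mul]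
      congr 1
      ring
    rw [Finset.sum_congr rfl fun xy _ => stepB xy]
    rw [Finset.sum_comm]
    refine Finset.sum_congr rfl fun α _ => ?_
    rw [Finset.sum_comm]
    refine Finset.sum_congr rfl fun β _ => ?_
    simp only [hfdef]
    rw [Finset.sum_mul_sum]
    exact Fintype.sum_prod_type _
  have hMle : M ≤ D.card := Finset.card_le_card (Finset.filter_subset _ _)
  have hwt : wt a b 0 = D.card - M := by
    show (D.filter _).card = _
    have hpred : (D.filter (fun xy : K × K =>
          Algebra.trace F2 K (a * xy.1 + b * xy.2) + (0 : F2) ≠ 0))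
        = D.filter (fun xy : K × K =>
          ¬ (Algebra.trace F2 K (a * xy.1 + b * xy.2) = 0)) :=
      Finset.filter_congr (fun xy _ => by rw [add_zero])
    rw [hpred, Finset.filter_not, Finset.card_sdiff_of_subset (Finset.filter_subset _ _), ← hMdef]
  rw [hwt]
  have hpC : (p : ℂ) ≠ 0 := Nat.cast_ne_zero.mpr hp.pos.ne'
  have hPne : ((p : ℂ) ^ s1 * (p : ℂ) ^ s2) ≠ 0 :=
    mul_ne_zero (pow_ne_zero _ hpC) (pow_ne_zero _ hpC)
  have hfinal : ((D.card - M : ℕ) : ℂ)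
      = ((p ^ (2 * s - s1 - s2) * (p ^ s2 - 1) : ℕ) : ℂ) := by
    rw [Nat.cast_sub hMle]
    apply mul_right_cancel₀ hPne
    have lhs1 : ((D.card : ℂ) - M) * ((p : ℂ) ^ s1 * (p : ℂ) ^ s2)
        = ((D.card : ℂ) * (p : ℂ) ^ s1) * (p : ℂ) ^ s2
          - (M : ℂ) * ((p : ℂ) ^ s1 * (p : ℂ) ^ s2) := by ring
    rw [lhs1, hD, hMsum, htotal, Nat.cast_mul, Nat.cast_pow, hcast2]
    have hppow : (p : ℂ) ^ (2 * s - s1 - s2) * ((p : ℂ) ^ s1 * (p : ℂ) ^ s2)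
        = (p : ℂ) ^ (2 * s) := by
      rw [← pow_add, ← pow_add]
      congr 1
      omega
    have hre : (p : ℂ) ^ (2 * s - s1 - s2) * ((p : ℂ) ^ s2 - 1)
          * ((p : ℂ) ^ s1 * (p : ℂ) ^ s2)
        = ((p : ℂ) ^ s2 - 1)
          * ((p : ℂ) ^ (2 * s - s1 - s2) * ((p : ℂ) ^ s1 * (p : ℂ) ^ s2)) := by ring
    rw [hre, hppow]
    ring
  exact Nat.cast_injective hfinal
end

section
/- Let p be an odd prime, s a positive integer, and s1, s2 divisors of s with s2 | s1. The number of pairs (a,b) ∈ F_{p^s}^2 with (a,b) ≠ (0,0) and Tr_{F_{p^s}/F_{p^{s2}}}(a^2+b^2) = 0 equals p^{2s-s2} + p^{-s2}(p^{s2}-1)G^2 - 1, where G^2 = (-1)^{((p-1)/2)s} p^s. -/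
open scoped BigOperators

section Helpers
open Finset
variable {K : Type} [Field K] [Fintype K] [DecidableEq K]
variable {K : Type} [Field K] [Fintype K] [DecidableEq K]

theorem L4 : (quadraticChar K)⁻¹ = quadraticChar K := by
  ext a
  rw [MulChar.inv_apply']
  have ha : (a : K) ≠ 0 := a.ne_zero
  have h1 : quadraticChar K (a : K)⁻¹ * quadraticChar K (a : K) = 1 := by
    rw [← map_mul, inv_mul_cancel₀ ha, map_one]
  have h2 : quadraticChar K (a : K) * quadraticChar K (a : K) = 1 := by
    rw [← sq]; exact quadraticChar_sq_one ha
  have hne : quadraticChar K (a : K) ≠ 0 := fun h => ha (quadraticChar_eq_zero_iff.mp h)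
  exact mul_right_cancel₀ hne (h1.trans h2.symm)

-- L2 fiber sum
theorem L2 (hK : ringChar K ≠ 2) (F : K → ℤ) :
    ∑ b : K, F (b ^ 2) = ∑ y : K, (quadraticChar K y + 1) * F y := by
  rw [← Finset.sum_fiberwise univ (fun b : K => b ^ 2) (fun b => F (b ^ 2))]
  refine Finset.sum_congr rfl fun y _ => ?_
  have h1 : ∑ b ∈ univ.filter (fun b : K => b ^ 2 = y), F (b ^ 2)
      = ((univ.filter (fun b : K => b ^ 2 = y)).card : ℤ) * F y := by
    rw [Finset.sum_congr rfl (fun b hb => by rw [(mem_filter.mp hb).2]), Finset.sum_const,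
      nsmul_eq_mul]
  rw [h1]
  congr 1
  have := quadraticChar_card_sqrts hK y
  rwa [Set.toFinset_setOf] at this

-- L5
theorem L5 (hK : ringChar K ≠ 2) :
    ∑ b : K, quadraticChar K ((0 : K) - b ^ 2)
      = quadraticChar K (-1) * ((Fintype.card K : ℤ) - 1) := by
  have h : ∀ b : K, quadraticChar K ((0 : K) - b ^ 2)
      = quadraticChar K (-1) * (if b = 0 then 0 else 1) := by
    intro b
    rcases eq_or_ne b 0 with rfl | hb
    · simp
    · rw [if_neg hb, mul_one, zero_sub, ← neg_one_mul, map_mul, quadraticChar_sq_one' hb, mul_one]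
  rw [Finset.sum_congr rfl fun b _ => h b, ← Finset.mul_sum]
  congr 1
  have : ∀ b : K, (if b = 0 then (0:ℤ) else 1) = 1 - (if b = 0 then 1 else 0) := by
    intro b; split <;> ring
  rw [Finset.sum_congr rfl fun b _ => this b, Finset.sum_sub_distrib, Finset.sum_const,
    Finset.sum_ite_eq' univ (0 : K) (fun _ => (1:ℤ))]
  rw [if_pos (Finset.mem_univ _), Finset.card_univ]
  ring

-- L3
theorem L3 (hK : ringChar K ≠ 2) {x : K} (hx : x ≠ 0) :
    ∑ b : K, quadraticChar K (x - b ^ 2) = - quadraticChar K (-1) := by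
  rw [L2 hK (fun y => quadraticChar K (x - y))]
  have expand : ∑ y : K, (quadraticChar K y + 1) * quadraticChar K (x - y)
      = ∑ y : K, quadraticChar K y * quadraticChar K (x - y)
        + ∑ y : K, quadraticChar K (x - y) := by
    rw [← Finset.sum_add_distrib]
    exact Finset.sum_congr rfl fun y _ => by ring
  have h0 : ∑ y : K, quadraticChar K (x - y) = 0 := by
    rw [show (∑ y : K, quadraticChar K (x - y)) = ∑ y : K, quadraticChar K y from
      Fintype.sum_equiv (Equiv.subLeft x) _ _ (fun y => rfl)]
    exact quadraticChar_sum_zero hK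
  have h1 : ∑ y : K, quadraticChar K y * quadraticChar K (x - y)
      = jacobiSum (quadraticChar K) (quadraticChar K) := by
    rw [jacobiSum]
    refine (Fintype.sum_equiv (Equiv.mulLeft₀ x hx)
      (fun t => quadraticChar K t * quadraticChar K (1 - t))
      (fun y => quadraticChar K y * quadraticChar K (x - y)) (fun t => ?_)).symm
    show quadraticChar K t * quadraticChar K (1 - t)
      = quadraticChar K (x * t) * quadraticChar K (x - x * t)
    rw [show x - x * t = x * (1 - t) by ring, map_mul, map_mul,
      show quadraticChar K x * quadraticChar K t * (quadraticChar K x * quadraticChar K (1 - t))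
        = (quadraticChar K x * quadraticChar K x) * (quadraticChar K t * quadraticChar K (1 - t))
        by ring, ← sq, quadraticChar_sq_one hx, one_mul]
  rw [expand, h0, add_zero, h1]
  nth_rewrite 2 [← L4]
  exact jacobiSum_nontrivial_inv (quadraticChar_ne_one hK)

-- N(x)
theorem Lcount (hK : ringChar K ≠ 2) (x : K) :
    ((univ.filter (fun ab : K × K => ab.1 ^ 2 + ab.2 ^ 2 = x)).card : ℤ)
      = (Fintype.card K : ℤ) + ∑ b : K, quadraticChar K (x - b ^ 2) := by
  have step1 : (univ.filter (fun ab : K × K => ab.1 ^ 2 + ab.2 ^ 2 = x)).card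
      = ∑ b : K, (univ.filter (fun a : K => a ^ 2 = x - b ^ 2)).card := by
    rw [Finset.card_filter, Fintype.sum_prod_type, Finset.sum_comm]
    refine Finset.sum_congr rfl fun b _ => ?_
    rw [Finset.card_filter]
    refine Finset.sum_congr rfl fun a _ => ?_
    congr 1
    simp only [eq_iff_iff]
    constructor <;> intro h <;> linear_combination h
  rw [step1]
  push_cast
  have L1 : ∀ y : K, ((univ.filter (fun b : K => b ^ 2 = y)).card : ℤ)
      = quadraticChar K y + 1 := by
    intro y
    have := quadraticChar_card_sqrts hK y
    rwa [Set.toFinset_setOf] at this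
  rw [Finset.sum_congr rfl fun b _ => L1 (x - b ^ 2), Finset.sum_add_distrib,
    Finset.sum_const, Finset.card_univ]
  push_cast
  ring

-- trace kernel
theorem Lker (F2 : Type) [Field F2] [Fintype F2] [Algebra F2 K] [DecidableEq F2] :
    (univ.filter (fun x : K => Algebra.trace F2 K x = 0)).card * Fintype.card F2
      = Fintype.card K := by
  have : FiniteDimensional F2 K := Module.Finite.of_finite
  have : Algebra.IsSeparable F2 K := by infer_instance
  have hsurj : Function.Surjective (Algebra.trace F2 K) := Algebra.trace_surjective F2 K
  let f : K →+ F2 := (Algebra.trace F2 K).toAddMonoidHom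
  have hsurj' : Function.Surjective f := hsurj
  have h1 : Nat.card K = Nat.card (K ⧸ f.ker) * Nat.card f.ker :=
    AddSubgroup.card_eq_card_quotient_mul_card_addSubgroup f.ker
  have h2 : Nat.card (K ⧸ f.ker) = Nat.card F2 :=
    Nat.card_congr (QuotientAddGroup.quotientKerEquivOfSurjective f hsurj').toEquiv
  have h3 : Nat.card f.ker = (univ.filter (fun x : K => Algebra.trace F2 K x = 0)).card := by
    rw [Nat.card_eq_fintype_card, ← Fintype.card_subtype]
    apply Fintype.card_congr
    exact Equiv.subtypeEquivRight fun x => by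
      simp [f, AddMonoidHom.mem_ker]
  rw [h2, h3, Nat.card_eq_fintype_card, Nat.card_eq_fintype_card] at h1
  rw [mul_comm] at h1
  exact h1.symm

end Helpers

/-- the number of `(a,b) ∈ F_{p^s}²` with `(a,b) ≠ (0,0)` and
`Tr_{K/F2}(a²+b²) = 0` equals `p^{2s-s2} + p^{-s2}(p^{s2}-1)G² - 1`, where
`G² = (-1)^(((p-1)/2)s) p^s`.  (Stated multiplied through by `p^{s2}`.) -/
theorem stmt10 (p s s1 s2 : ℕ) (hp : p.Prime) (hodd : Odd p) (hs : 0 < s)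
    (hs2 : 0 < s2) (hdvd1 : s1 ∣ s) (hdvd2 : s2 ∣ s1)
    (F2 K : Type) [Field F2] [Field K] [Fintype F2] [Fintype K]
    [DecidableEq F2] [DecidableEq K] [Algebra F2 K]
    (hcard2 : Fintype.card F2 = p ^ s2) (hcard : Fintype.card K = p ^ s) :
    ((Finset.univ.filter (fun ab : K × K =>
        ¬(ab.1 = 0 ∧ ab.2 = 0) ∧ Algebra.trace F2 K (ab.1 ^ 2 + ab.2 ^ 2) = 0)).card : ℤ)
        * p ^ s2
      = p ^ (2 * s) + (p ^ s2 - 1) * ((-1) ^ (((p - 1) / 2) * s) * p ^ s)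
          - p ^ s2 := by
    classical
  -- characteristic of K is not 2
  have hK2 : ringChar K ≠ 2 := by
    intro h
    have h2 := FiniteField.even_card_of_char_two h
    rw [hcard] at h2
    have : (2 : ℕ) ∣ p := Nat.Prime.dvd_of_dvd_pow Nat.prime_two (Nat.dvd_of_mod_eq_zero h2)
    have := Nat.odd_iff.mp hodd
    omega
  set e : ℤ := quadraticChar K (-1) with he
  -- value of e
  have hq4 : e = (-1 : ℤ) ^ (((p - 1) / 2) * s) := by
    rw [he, quadraticChar_neg_one hK2, hcard]
    have hcast : ((p ^ s : ℕ) : ZMod 4) = ((p : ℕ) : ZMod 4) ^ s := by push_cast; ring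
    rw [hcast, map_pow]
    have hp2 : p % 2 = 1 := Nat.odd_iff.mp hodd
    rw [ZMod.χ₄_nat_eq_if_mod_four]
    have h4 : p % 4 = 1 ∨ p % 4 = 3 := by omega
    have hhalf : p / 2 = (p - 1) / 2 := by omega
    rcases h4 with h4 | h4
    · rw [if_neg (by omega), if_pos h4, one_pow, pow_mul]
      have : (p - 1) / 2 % 2 = 0 := by omega
      rw [show (-1 : ℤ) ^ ((p - 1) / 2) = 1 by
        rw [show (p-1)/2 = 2 * ((p-1)/2/2) by omega, pow_mul]; norm_num, one_pow]
    · rw [if_neg (by omega), if_neg (by omega), pow_mul]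
      congr 1
      rw [show (p-1)/2 = 2 * ((p-1)/2/2) + 1 by omega, pow_add, pow_mul]
      norm_num
  set S : Finset (K × K) :=
    Finset.univ.filter (fun ab : K × K => Algebra.trace F2 K (ab.1 ^ 2 + ab.2 ^ 2) = 0) with hS
  set T : Finset K := Finset.univ.filter (fun x : K => Algebra.trace F2 K x = 0) with hT
  have h00 : ((0 : K), (0 : K)) ∈ S := by
    simp [hS]
  have hset : (Finset.univ.filter (fun ab : K × K =>
      ¬(ab.1 = 0 ∧ ab.2 = 0) ∧ Algebra.trace F2 K (ab.1 ^ 2 + ab.2 ^ 2) = 0))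
      = S.erase ((0 : K), (0 : K)) := by
    ext ab
    simp only [Finset.mem_filter, Finset.mem_erase, Finset.mem_univ, true_and, hS,
      Ne, Prod.ext_iff]
  have h0T : (0 : K) ∈ T := by simp [hT]
  -- fiberwise count
  have hfib : S.card = ∑ x ∈ T, (Finset.univ.filter
      (fun ab : K × K => ab.1 ^ 2 + ab.2 ^ 2 = x)).card := by
    rw [Finset.card_eq_sum_card_fiberwise
      (f := fun ab : K × K => ab.1 ^ 2 + ab.2 ^ 2) (t := T)
      (fun ab hab => by simp only [hS, Finset.mem_coe, Finset.mem_filter] at hab; simp [hT, hab.2])]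
    refine Finset.sum_congr rfl fun x hx => ?_
    congr 1
    ext ab
    simp only [hS, Finset.mem_filter, Finset.mem_univ, true_and]
    constructor
    · exact fun h => h.2
    · intro h
      refine ⟨?_, h⟩
      rw [h]
      simpa [hT] using hx
  -- evaluate the sum in ℤ
  have hSZ : (S.card : ℤ) = ((Fintype.card K : ℤ) + e * (Fintype.card K - 1))
      + ((T.card : ℤ) - 1) * ((Fintype.card K : ℤ) - e) := by
    rw [hfib]
    push_cast
    rw [← Finset.add_sum_erase _ _ h0T]
    rw [Lcount hK2 0, L5 hK2]
    have : ∑ x ∈ T.erase 0, ((Finset.univ.filter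
        (fun ab : K × K => ab.1 ^ 2 + ab.2 ^ 2 = x)).card : ℤ)
        = ∑ x ∈ T.erase 0, ((Fintype.card K : ℤ) - e) := by
      refine Finset.sum_congr rfl fun x hx => ?_
      rw [Lcount hK2 x, L3 hK2 (Finset.ne_of_mem_erase hx)]
      ring
    rw [this, Finset.sum_const, Finset.card_erase_of_mem h0T, nsmul_eq_mul]
    have hTpos : 1 ≤ T.card := Finset.card_pos.mpr ⟨0, h0T⟩
    push_cast [Nat.cast_sub hTpos]
    ring
  -- kernel size
  have hk : (T.card : ℤ) * (p : ℤ) ^ s2 = (p : ℤ) ^ s := by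
    have := Lker (K := K) F2
    rw [hcard2, hcard] at this
    exact_mod_cast this
  rw [hset, Finset.cast_card_erase_of_mem h00, hSZ, ← hq4, hcard]
  push_cast
  linear_combination ((p : ℤ) ^ s - e) * hk
end

section
/- Let p be an odd prime and s1 | s2 positive integers. If s2/s1 is odd, then the quadratic character η'' of F_{p^{s2}} restricted to F_{p^{s1}}^* coincides with the quadratic character η' of F_{p^{s1}}; if s2/s1 is even, then η''(b) = 1 for every b ∈ F_{p^{s1}}^*. -/
/-- The quadratic character of a finite field (values in ℤ), extended by `η(0) = 0`. -/
noncomputable def quadCharZ (F : Type) [Field F] [Fintype F] [DecidableEq F] (x : F) : ℤ :=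
  if x = 0 then 0 else if IsSquare x then 1 else -1

lemma ringChar_ne_two_aux (p s : ℕ) (hp : p.Prime) (hodd : Odd p) (F : Type) [Field F] [Fintype F]
    (hcard : Fintype.card F = p ^ s) : ringChar F ≠ 2 := by
  have h1 : (ringChar F).Prime := by
    haveI := ringChar.charP F
    exact CharP.char_is_prime F (ringChar F)
  have h2 : (ringChar F : F) = 0 := ringChar.spec F (ringChar F) |>.mpr dvd_rfl
  have h3 : ringChar F ∣ Fintype.card F := by
    haveI := ringChar.charP F
    exact (CharP.cast_eq_zero_iff F (ringChar F) (Fintype.card F)).mp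
      (Nat.cast_card_eq_zero F)
  rw [hcard] at h3
  have h4 : ringChar F = p := (Nat.prime_dvd_prime_iff_eq h1 hp).mp (h1.dvd_of_dvd_pow h3)
  rw [h4]
  intro h; rw [h] at hodd; simp [Nat.odd_iff] at hodd

/-- for `F_{p^{s1}} ⊆ F_{p^{s2}}` of odd characteristic, the quadratic
character `η''` of `F_{p^{s2}}` restricted to `F_{p^{s1}}^*` equals `η'` when `s2/s1`
is odd, and is identically `1` on `F_{p^{s1}}^*` when `s2/s1` is even. -/
theorem stmt17 (p s1 s2 : ℕ) (hp : p.Prime) (hodd : Odd p) (hs1 : 0 < s1)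
    (hdvd : s1 ∣ s2)
    (F1 F2 : Type) [Field F1] [Field F2] [Fintype F1] [Fintype F2]
    [DecidableEq F1] [DecidableEq F2] [Algebra F1 F2]
    (hcard1 : Fintype.card F1 = p ^ s1) (hcard2 : Fintype.card F2 = p ^ s2) :
    (Odd (s2 / s1) → ∀ b : F1, b ≠ 0 →
      quadCharZ F2 (algebraMap F1 F2 b) = quadCharZ F1 b) ∧
    (Even (s2 / s1) → ∀ b : F1, b ≠ 0 →
      quadCharZ F2 (algebraMap F1 F2 b) = 1) := by
  set m := s2 / s1 with hm
  have hs2 : s2 = s1 * m := (Nat.div_mul_cancel hdvd).symm.trans (mul_comm _ _)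
  have hchar1 : ringChar F1 ≠ 2 := ringChar_ne_two_aux p s1 hp hodd F1 hcard1
  have hchar2 : ringChar F2 ≠ 2 := ringChar_ne_two_aux p s2 hp hodd F2 hcard2
  have hq1odd : Odd (Fintype.card F1) := by rw [hcard1]; exact hodd.pow
  have hcard2' : Fintype.card F2 = Fintype.card F1 ^ m := by
    rw [hcard2, hcard1, ← pow_mul, hs2]
  -- key computation
  have key : ∀ b : F1, b ≠ 0 →
      (algebraMap F1 F2 b) ^ (Fintype.card F2 / 2) =
        algebraMap F1 F2 ((b ^ (Fintype.card F1 / 2)) ^ m) := by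
    intro b hb
    have step : ∀ n : ℕ, b ^ (Fintype.card F1 ^ n / 2) = (b ^ (Fintype.card F1 / 2)) ^ n := by
      intro n
      induction n with
      | zero => simp
      | succ n ih =>
        obtain ⟨a, ha⟩ := (Odd.pow hq1odd : Odd (Fintype.card F1 ^ n))
        obtain ⟨k, hk⟩ := id hq1odd
        have e1 : Fintype.card F1 ^ (n + 1) = 2 * (2 * (a * k) + a + k) + 1 := by
          rw [pow_succ, ha, hk]; ring
        have e2 : Fintype.card F1 ^ (n + 1) / 2 = 2 * (a * k) + a + k := by omega
        have e3 : Fintype.card F1 ^ n / 2 = a := by omega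
        have e4 : Fintype.card F1 / 2 = k := by omega
        have hexp : Fintype.card F1 ^ (n + 1) / 2 =
            (Fintype.card F1 ^ n / 2) * Fintype.card F1 + Fintype.card F1 / 2 := by
          rw [e2, e3, e4, hk]; ring
        rw [hexp, pow_add, pow_mul, FiniteField.pow_card, ih, pow_succ]
    rw [hcard2', ← map_pow, step]
  -- ε = b ^ (card F1 / 2) is ±1
  have heps : ∀ b : F1, b ≠ 0 →
      b ^ (Fintype.card F1 / 2) = 1 ∨ b ^ (Fintype.card F1 / 2) = -1 := by
    intro b hb
    have h1 : b ^ (Fintype.card F1 / 2) * b ^ (Fintype.card F1 / 2) = 1 := by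
      rw [← pow_add]
      have h2 : Fintype.card F1 / 2 + Fintype.card F1 / 2 = Fintype.card F1 - 1 := by
        obtain ⟨k, hk⟩ := id hq1odd; omega
      rw [h2, FiniteField.pow_card_sub_one_eq_one b hb]
    exact mul_self_eq_one_iff.mp h1
  have hmapne : ∀ b : F1, b ≠ 0 → algebraMap F1 F2 b ≠ 0 := by
    intro b hb
    exact fun h => hb ((algebraMap F1 F2).injective (by rw [h, map_zero]))
  constructor
  · intro hmo b hb
    have hbne := hmapne b hb
    rcases heps b hb with h1 | h1
    · have hsq1 : IsSquare b := (FiniteField.isSquare_iff hchar1 hb).mpr h1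
      have hsq2 : IsSquare (algebraMap F1 F2 b) := by
        rw [FiniteField.isSquare_iff hchar2 hbne, key b hb, h1, one_pow, map_one]
      simp [quadCharZ, hb, hbne, hsq1, hsq2]
    · have hsq1 : ¬ IsSquare b := by
        rw [FiniteField.isSquare_iff hchar1 hb, h1]
        exact fun h => Ring.neg_one_ne_one_of_char_ne_two hchar1 h
      have hsq2 : ¬ IsSquare (algebraMap F1 F2 b) := by
        rw [FiniteField.isSquare_iff hchar2 hbne, key b hb, h1, hmo.neg_one_pow, map_neg, map_one]
        exact fun h => Ring.neg_one_ne_one_of_char_ne_two hchar2 h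
      simp [quadCharZ, hb, hbne, hsq1, hsq2]
  · intro hme b hb
    have hbne := hmapne b hb
    have hsq2 : IsSquare (algebraMap F1 F2 b) := by
      rw [FiniteField.isSquare_iff hchar2 hbne, key b hb]
      rcases heps b hb with h1 | h1 <;> rw [h1]
      · rw [one_pow, map_one]
      · rw [hme.neg_one_pow, map_one]
    simp [quadCharZ, hbne, hsq2]
end

section
/- Let C be a self-orthogonal [n,k] linear code over F_q with generator matrix G (an k×n matrix of rank k whose rows span C and satisfy G·Gᵀ = 0). Then the k×(n+k) matrix [I_k : G] generates an [n+k, k] linear code C' over F_q that is an LCD code, i.e., C' ∩ C'^⊥ = {0}. -/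
open scoped BigOperators

/-- if `C` is a self-orthogonal `[n,k]` code over `F_q` with generator
matrix `G` (rows linearly independent, `G·Gᵀ = 0`), then the matrix `[I_k : G]`
generates an `[n+k, k]` code `C'` that is LCD, i.e. `C' ∩ C'^⊥ = {0}`. -/
theorem stmt18 (n k : ℕ) (F : Type) [Field F] [Fintype F] [DecidableEq F]
    (G : Matrix (Fin k) (Fin n) F)
    (hso : G * G.transpose = 0)
    (hrank : LinearIndependent F (fun i : Fin k => G i)) :
    let row : Fin k → (Fin k ⊕ Fin n → F) := fun i =>
      Sum.elim (fun j => if i = j then (1 : F) else 0) (G i)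
    let C' : Submodule F (Fin k ⊕ Fin n → F) := Submodule.span F (Set.range row)
    -- `C'` has dimension `k` (length `n + k`)
    LinearIndependent F row ∧
    -- `C'` is LCD: its intersection with its dual is trivial
    (∀ v ∈ C', (∀ u ∈ C', ∑ j, u j * v j = 0) → v = 0) := by
  intro row C'
  have hli : LinearIndependent F row := by
    apply LinearIndependent.of_comp (LinearMap.funLeft F F Sum.inl)
    have : (LinearMap.funLeft F F Sum.inl) ∘ row = fun i => Pi.single i (1 : F) := by
      funext i j
      simp [row, LinearMap.funLeft, Pi.single_apply, eq_comm]
    rw [this]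
    have heq : (fun i => Pi.single i (1:F)) = ⇑(Pi.basisFun F (Fin k)) := by
      funext i j
      simp [Pi.basisFun_apply, Pi.single_apply, Pi.single_apply]
    rw [heq]
    exact (Pi.basisFun F (Fin k)).linearIndependent
  refine ⟨hli, ?_⟩
  intro v hv horth
  rw [Submodule.mem_span_range_iff_exists_fun] at hv
  obtain ⟨c, hc⟩ := hv
  have hvinl : ∀ i, v (Sum.inl i) = c i := by
    intro i
    rw [← hc]
    simp [row, Finset.sum_apply, Pi.smul_apply, mul_ite, mul_comm]
  have hvinr : ∀ j, v (Sum.inr j) = ∑ l, c l * G l j := by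
    intro j
    rw [← hc]
    simp [row, Finset.sum_apply, Pi.smul_apply]
  have hc0 : ∀ i, c i = 0 := by
    intro i
    have h := horth (row i) (Submodule.subset_span (Set.mem_range_self i))
    rw [Fintype.sum_sum_type] at h
    have h1 : ∑ j, row i (Sum.inl j) * v (Sum.inl j) = c i := by
      simp [row, hvinl, ite_mul]
    have h2 : ∑ j, row i (Sum.inr j) * v (Sum.inr j) = 0 := by
      have : ∑ j, row i (Sum.inr j) * v (Sum.inr j)
          = ∑ l, c l * (G * G.transpose) i l := by
        simp only [row, Sum.elim_inr, hvinr, Matrix.mul_apply, Matrix.transpose_apply,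
          Finset.mul_sum, Finset.sum_mul]
        rw [Finset.sum_comm]
        congr 1; funext j; congr 1; funext l; ring
      rw [this, hso]
      simp
    rw [h1, h2] at h
    simpa using h
  rw [← hc]
  simp [hc0]
end
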